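/- arXiv:2508.03667 — 2 statements merged into one kernel-verified Lean document; each statement's English description precedes it below -/
import Mathlib

section
/- Let R be a Γ-graded ring and M a Γ-graded right R-module. Then M is strongly Γ0-artinian (resp. strongly Γ0-noetherian) if and only if M is Γ0-artinian (resp. Γ0-noetherian) and there exist a subset Δ₀ ⊆ Γ₀ and n₀ ∈ ℕ such that Γ₀ \ Δ₀ is finite and, for every e ∈ Δ₀, M(e) has finite gr-length not greater than n₀. -/
open CategoryTheory

universe u

instance addSubgroupNormalOfComm {M : Type*} [AddCommGroup M] (N : AddSubgroup M) :
    N.Normal := ⟨fun n hn g => by simpa [add_comm] using hn⟩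

variable {Γ : Type u} [Groupoid.{u} Γ]

/-- The morphisms of the groupoid `Γ`, bundled together with their endpoints.
For `γ : GrIdx Γ`, the morphism `γ.2.2 : γ.1 ⟶ γ.2.1` has domain `d(γ) = γ.1`
and range `r(γ) = γ.2.1`. -/
abbrev GrIdx (Γ : Type u) [Groupoid.{u} Γ] : Type u := Σ e f : Γ, e ⟶ f

/-- The data of a `Γ`-grading, a multiplication, and local units `1_e` on an
additive group `R`. -/
structure GRingData (Γ : Type u) [Groupoid.{u} Γ] (R : Type u) [AddCommGroup R] :
    Type u where
  mul : R → R → R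
  component : ∀ {e f : Γ}, (e ⟶ f) → AddSubgroup R
  one : Γ → R

/-- The data of a right scalar multiplication by `R` and a `Γ`-grading on an
additive group `M`. -/
structure GModData (Γ : Type u) [Groupoid.{u} Γ] (R : Type u) (M : Type u)
    [AddCommGroup M] : Type u where
  smul : M → R → M
  component : ∀ {e f : Γ}, (e ⟶ f) → AddSubgroup M

namespace GRingData

variable {R : Type u} [AddCommGroup R]

/-- `𝒜` makes `R` an (object unital) `Γ`-graded ring: `R` is an associative ring,
`R = ⊕_γ R_γ`, `R_γ R_δ ⊆ R_{γδ}` when `γδ` is defined and `R_γ R_δ = 0` otherwise,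
each `R_e` (`e ∈ Γ₀`) is unital with identity `1_e`, and
`1_{r(γ)} a = a 1_{d(γ)} = a` for all `a ∈ R_γ`. -/
structure IsObjectUnital (𝒜 : GRingData Γ R) : Prop where
  mul_assoc : ∀ a b c : R, 𝒜.mul (𝒜.mul a b) c = 𝒜.mul a (𝒜.mul b c)
  left_distrib : ∀ a b c : R, 𝒜.mul a (b + c) = 𝒜.mul a b + 𝒜.mul a c
  right_distrib : ∀ a b c : R, 𝒜.mul (a + b) c = 𝒜.mul a c + 𝒜.mul b c
  decompose : ∀ x : R, ∃ (s : Finset (GrIdx Γ)) (cf : GrIdx Γ → R),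
      (∀ γ ∈ s, cf γ ∈ 𝒜.component γ.2.2) ∧ x = ∑ γ ∈ s, cf γ
  independent : ∀ (s : Finset (GrIdx Γ)) (cf : GrIdx Γ → R),
      (∀ γ ∈ s, cf γ ∈ 𝒜.component γ.2.2) → ∑ γ ∈ s, cf γ = 0 → ∀ γ ∈ s, cf γ = 0
  mul_mem : ∀ {e f g : Γ} (γ : e ⟶ f) (δ : g ⟶ e) {a b : R},
      a ∈ 𝒜.component γ → b ∈ 𝒜.component δ → 𝒜.mul a b ∈ 𝒜.component (δ ≫ γ)
  mul_eq_zero : ∀ {e f g h : Γ} (γ : e ⟶ f) (δ : g ⟶ h) {a b : R},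
      h ≠ e → a ∈ 𝒜.component γ → b ∈ 𝒜.component δ → 𝒜.mul a b = 0
  one_mem : ∀ e : Γ, 𝒜.one e ∈ 𝒜.component (𝟙 e)
  one_mul : ∀ {e f : Γ} (γ : e ⟶ f) {a : R}, a ∈ 𝒜.component γ → 𝒜.mul (𝒜.one f) a = a
  mul_one : ∀ {e f : Γ} (γ : e ⟶ f) {a : R}, a ∈ 𝒜.component γ → 𝒜.mul a (𝒜.one e) = a

/-- `R` regarded as a (`Γ`-graded) right module over itself. -/
def toMod (𝒜 : GRingData Γ R) : GModData Γ R R where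
  smul := 𝒜.mul
  component := fun γ => 𝒜.component γ

end GRingData

namespace GModData

variable {R : Type u} {M : Type u} {M' : Type u} [AddCommGroup M] [AddCommGroup M']

/-- `ℳ` makes `M` a unital `Γ`-graded right module over the `Γ`-graded ring `𝒜`:
`M` is a right `R`-module, `M = ⊕_γ M_γ`, `M_σ R_τ ⊆ M_{στ}` when `στ` is defined
and `M_σ R_τ = 0` otherwise, and `m 1_{d(σ)} = m` for all `m ∈ M_σ`. -/
structure IsGraded [AddCommGroup R] (𝒜 : GRingData Γ R) (ℳ : GModData Γ R M) :
    Prop where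
  add_smul : ∀ (m n : M) (a : R), ℳ.smul (m + n) a = ℳ.smul m a + ℳ.smul n a
  smul_add : ∀ (m : M) (a b : R), ℳ.smul m (a + b) = ℳ.smul m a + ℳ.smul m b
  smul_mul : ∀ (m : M) (a b : R), ℳ.smul m (𝒜.mul a b) = ℳ.smul (ℳ.smul m a) b
  decompose : ∀ x : M, ∃ (s : Finset (GrIdx Γ)) (cf : GrIdx Γ → M),
      (∀ γ ∈ s, cf γ ∈ ℳ.component γ.2.2) ∧ x = ∑ γ ∈ s, cf γ
  independent : ∀ (s : Finset (GrIdx Γ)) (cf : GrIdx Γ → M),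
      (∀ γ ∈ s, cf γ ∈ ℳ.component γ.2.2) → ∑ γ ∈ s, cf γ = 0 → ∀ γ ∈ s, cf γ = 0
  smul_mem : ∀ {e f g : Γ} (σ : e ⟶ f) (τ : g ⟶ e) {m : M} {a : R},
      m ∈ ℳ.component σ → a ∈ 𝒜.component τ → ℳ.smul m a ∈ ℳ.component (τ ≫ σ)
  smul_eq_zero : ∀ {e f g h : Γ} (σ : e ⟶ f) (τ : g ⟶ h) {m : M} {a : R},
      h ≠ e → m ∈ ℳ.component σ → a ∈ 𝒜.component τ → ℳ.smul m a = 0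
  smul_one : ∀ {e f : Γ} (σ : e ⟶ f) {m : M}, m ∈ ℳ.component σ →
      ℳ.smul m (𝒜.one e) = m

/-- An element of `M` is homogeneous if it belongs to some homogeneous component. -/
def IsHomogeneous (ℳ : GModData Γ R M) (m : M) : Prop :=
  ∃ (e f : Γ) (γ : e ⟶ f), m ∈ ℳ.component γ

/-- `N` is a graded submodule of `M`: a submodule (subgroup closed under the right
`R`-action) generated by its homogeneous elements, i.e. `N = ⊕_γ (N ∩ M_γ)`. -/
def IsGrSub (ℳ : GModData Γ R M) (N : AddSubgroup M) : Prop :=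
  (∀ m ∈ N, ∀ a : R, ℳ.smul m a ∈ N) ∧
  ∀ n ∈ N, n ∈ AddSubgroup.closure {x : M | x ∈ N ∧ ℳ.IsHomogeneous x}

/-- `M` is gr-noetherian: there is no strictly increasing infinite chain of graded
submodules. -/
def GrNoetherian (ℳ : GModData Γ R M) : Prop :=
  ¬ ∃ c : ℕ → AddSubgroup M, (∀ n, ℳ.IsGrSub (c n)) ∧ ∀ n, c n < c (n + 1)

/-- `M` is gr-artinian: there is no strictly decreasing infinite chain of graded
submodules. -/
def GrArtinian (ℳ : GModData Γ R M) : Prop :=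
  ¬ ∃ c : ℕ → AddSubgroup M, (∀ n, ℳ.IsGrSub (c n)) ∧ ∀ n, c (n + 1) < c n

/-- The `R`-submodule of `M` generated by a set `X`. -/
def rClosure (ℳ : GModData Γ R M) (X : Set M) : AddSubgroup M :=
  sInf {N : AddSubgroup M | X ⊆ N ∧ ∀ m ∈ N, ∀ a : R, ℳ.smul m a ∈ N}

/-- `M` is finitely generated (as a right `R`-module). -/
def FG (ℳ : GModData Γ R M) : Prop := ∃ s : Finset M, ℳ.rClosure ↑s = ⊤

/-- The submodule `N` of `M` is finitely generated. -/
def FGSub (ℳ : GModData Γ R M) (N : AddSubgroup M) : Prop :=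
  ∃ s : Finset M, ↑s ⊆ (N : Set M) ∧ ℳ.rClosure ↑s = N

/-- `M` is finitely gr-cogenerated: every family of graded submodules with zero
intersection has a finite subfamily with zero intersection. -/
def FinGrCogenerated (ℳ : GModData Γ R M) : Prop :=
  ∀ S : Set (AddSubgroup M), (∀ N ∈ S, ℳ.IsGrSub N) → sInf S = ⊥ →
    ∃ t : Finset (AddSubgroup M), ↑t ⊆ S ∧ t.inf id = ⊥

/-- The quotient module `M/N`, with grading `(M/N)_γ = (M_γ + N)/N`. -/
noncomputable def quot (ℳ : GModData Γ R M) (N : AddSubgroup M) :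
    GModData Γ R (M ⧸ N) where
  smul x a := QuotientAddGroup.mk (ℳ.smul (Quotient.out x) a)
  component := fun γ => (ℳ.component γ).map (QuotientAddGroup.mk' N)

open scoped Classical in
/-- The submodule `N`, regarded as a `Γ`-graded right `R`-module. -/
noncomputable def restrict (ℳ : GModData Γ R M) (N : AddSubgroup M) :
    GModData Γ R ↥N where
  smul m a := if h : ℳ.smul (↑m) a ∈ N then ⟨ℳ.smul (↑m) a, h⟩ else 0
  component := fun γ => (ℳ.component γ).addSubgroupOf N

/-- The subquotient module `P/N` (for `N ≤ P` graded submodules of `M`). -/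
noncomputable def subquot (ℳ : GModData Γ R M) (N P : AddSubgroup M) :
    GModData Γ R (↥P ⧸ N.addSubgroupOf P) :=
  (ℳ.restrict P).quot (N.addSubgroupOf P)

/-- `M(e) = ⊕_{r(γ) = e} M_γ`, for `e ∈ Γ₀`. -/
def part (ℳ : GModData Γ R M) (e : Γ) : AddSubgroup M :=
  ⨆ (f : Γ) (γ : f ⟶ e), ℳ.component γ

/-- `Γ'₀(M) = {e ∈ Γ₀ : M(e) ≠ 0}`. -/
def partSupport (ℳ : GModData Γ R M) : Set Γ := {e : Γ | ℳ.part e ≠ ⊥}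

/-- `M` is `Γ₀`-noetherian: `M(e)` is gr-noetherian for every `e ∈ Γ₀`. -/
def G0Noetherian (ℳ : GModData Γ R M) : Prop :=
  ∀ e : Γ, (ℳ.restrict (ℳ.part e)).GrNoetherian

/-- `M` is `Γ₀`-artinian: `M(e)` is gr-artinian for every `e ∈ Γ₀`. -/
def G0Artinian (ℳ : GModData Γ R M) : Prop :=
  ∀ e : Γ, (ℳ.restrict (ℳ.part e)).GrArtinian

/-- `M` is gr-simple: `M ≠ 0` and its only graded submodules are `0` and `M`. -/
def IsGrSimple (ℳ : GModData Γ R M) : Prop :=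
  (⊤ : AddSubgroup M) ≠ ⊥ ∧ ∀ N : AddSubgroup M, ℳ.IsGrSub N → N = ⊥ ∨ N = ⊤

/-- `N` is a gr-simple graded submodule of `M`. -/
def IsGrSimpleSub (ℳ : GModData Γ R M) (N : AddSubgroup M) : Prop :=
  ℳ.IsGrSub N ∧ N ≠ ⊥ ∧
    ∀ L : AddSubgroup M, ℳ.IsGrSub L → L ≤ N → L = ⊥ ∨ L = N

/-- `N` is a gr-maximal graded submodule of `M`. -/
def IsGrMaximalSub (ℳ : GModData Γ R M) (N : AddSubgroup M) : Prop :=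
  ℳ.IsGrSub N ∧ N ≠ ⊤ ∧
    ∀ L : AddSubgroup M, ℳ.IsGrSub L → N ≤ L → L = N ∨ L = ⊤

/-- The graded Jacobson radical of `M`: the intersection of all gr-maximal graded
submodules of `M` (equal to `M` when there are none). -/
def grRad (ℳ : GModData Γ R M) : AddSubgroup M := sInf {N | ℳ.IsGrMaximalSub N}

/-- The gr-socle of `M`: the sum of all gr-simple graded submodules of `M`
(equal to `0` when there are none). -/
def grSoc (ℳ : GModData Γ R M) : AddSubgroup M := sSup {N | ℳ.IsGrSimpleSub N}

/-- `N` is gr-superfluous in `M`. -/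
def GrSuperfluous (ℳ : GModData Γ R M) (N : AddSubgroup M) : Prop :=
  ∀ X : AddSubgroup M, ℳ.IsGrSub X → N ⊔ X = ⊤ → X = ⊤

/-- `N` is gr-essential in `M`. -/
def GrEssential (ℳ : GModData Γ R M) (N : AddSubgroup M) : Prop :=
  ∀ X : AddSubgroup M, ℳ.IsGrSub X → N ⊓ X = ⊥ → X = ⊥

/-- `M` is gr-semisimple: the sum of all gr-simple graded submodules is `M`. -/
def GrSemisimple (ℳ : GModData Γ R M) : Prop :=
  sSup {N : AddSubgroup M | ℳ.IsGrSimpleSub N} = ⊤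

/-- `c 0 = 0 ⊆ c 1 ⊆ ⋯ ⊆ c n = M` is a gr-composition series of `M` of length `n`. -/
def IsGrCompSeries (ℳ : GModData Γ R M) (n : ℕ) (c : ℕ → AddSubgroup M) : Prop :=
  c 0 = ⊥ ∧ c n = ⊤ ∧ (∀ i, i ≤ n → ℳ.IsGrSub (c i)) ∧
  (∀ i, i < n → c i ≤ c (i + 1)) ∧
  ∀ i, i < n → (ℳ.subquot (c i) (c (i + 1))).IsGrSimple

/-- `M` has finite gr-length: it admits a gr-composition series. -/
def FiniteGrLength (ℳ : GModData Γ R M) : Prop := ∃ n c, ℳ.IsGrCompSeries n c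

/-- `g : M → M'` is a gr-homomorphism of graded right `R`-modules. -/
def IsGrHom (ℳ : GModData Γ R M) (𝒩 : GModData Γ R M') (g : M → M') : Prop :=
  (∀ m n : M, g (m + n) = g m + g n) ∧
  (∀ (m : M) (a : R), g (ℳ.smul m a) = 𝒩.smul (g m) a) ∧
  ∀ (e f : Γ) (σ : e ⟶ f), ∀ m ∈ ℳ.component σ, g m ∈ 𝒩.component σ

/-- `M` and `M'` are gr-isomorphic (there is a bijective gr-homomorphism). -/
def GrIso (ℳ : GModData Γ R M) (𝒩 : GModData Γ R M') : Prop :=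
  ∃ g : M → M', IsGrHom ℳ 𝒩 g ∧ Function.Bijective g

/-- `g : M → M'` is a homomorphism of degree `γ` (where `γ : e ⟶ f`, i.e.
`d(γ) = e`): `g(M_σ) ⊆ M'_{γσ}` when `γσ` is defined and `g(M_σ) = 0` otherwise. -/
def IsHomOfDeg (ℳ : GModData Γ R M) (𝒩 : GModData Γ R M') {e f : Γ} (γ : e ⟶ f)
    (g : M → M') : Prop :=
  (∀ m n : M, g (m + n) = g m + g n) ∧
  (∀ (m : M) (a : R), g (ℳ.smul m a) = 𝒩.smul (g m) a) ∧
  (∀ (a : Γ) (σ : a ⟶ e), ∀ m ∈ ℳ.component σ, g m ∈ 𝒩.component (σ ≫ γ)) ∧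
  (∀ (a b : Γ) (σ : a ⟶ b), b ≠ e → ∀ m ∈ ℳ.component σ, g m = 0)

/-- `MJ`: the submodule of `M` consisting of finite sums of elements `m a`,
`m ∈ M`, `a ∈ J`. -/
def smulSet [AddCommGroup R] (ℳ : GModData Γ R M) (J : AddSubgroup R) : AddSubgroup M :=
  AddSubgroup.closure {x : M | ∃ (m : M) (a : R), a ∈ J ∧ x = ℳ.smul m a}

open scoped Classical in
/-- The direct sum `⊕_{j ∈ J} M_j` of graded right modules, with grading
`(⊕_j M_j)_γ = ⊕_j (M_j)_γ`. -/
noncomputable def dsum {J : Type u} {Mf : J → Type u} [∀ j, AddCommGroup (Mf j)]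
    (df : ∀ j, GModData Γ R (Mf j)) : GModData Γ R (Π₀ j, Mf j) where
  smul m a :=
    if h : ∃ y : Π₀ j, Mf j, ∀ j, y j = (df j).smul (m j) a then h.choose else 0
  component := fun γ => ⨅ j : J, ((df j).component γ).comap (DFinsupp.evalAddMonoidHom j)

/-- A descending chain of graded submodules is tight if
`Γ'₀(M_i/M_{i+1}) ⊇ Γ'₀(M_{i+1}/M_{i+2})` for all `i`. -/
def TightDesc (ℳ : GModData Γ R M) (c : ℕ → AddSubgroup M) : Prop :=
  (∀ i, ℳ.IsGrSub (c i)) ∧ (∀ i, c (i + 1) ≤ c i) ∧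
  ∀ i, (ℳ.subquot (c (i + 2)) (c (i + 1))).partSupport ⊆
    (ℳ.subquot (c (i + 1)) (c i)).partSupport

/-- An ascending chain of graded submodules is tight if
`Γ'₀(M_{i+1}/M_i) ⊇ Γ'₀(M_{i+2}/M_{i+1})` for all `i`. -/
def TightAsc (ℳ : GModData Γ R M) (c : ℕ → AddSubgroup M) : Prop :=
  (∀ i, ℳ.IsGrSub (c i)) ∧ (∀ i, c i ≤ c (i + 1)) ∧
  ∀ i, (ℳ.subquot (c (i + 1)) (c (i + 2))).partSupport ⊆
    (ℳ.subquot (c i) (c (i + 1))).partSupport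

/-- `M` is strongly `Γ₀`-artinian: every tight descending chain of graded
submodules stabilizes. -/
def StronglyG0Artinian (ℳ : GModData Γ R M) : Prop :=
  ∀ c : ℕ → AddSubgroup M, ℳ.TightDesc c → ∃ n, ∀ m, n ≤ m → c m = c n

/-- `M` is strongly `Γ₀`-noetherian: every tight ascending chain of graded
submodules stabilizes. -/
def StronglyG0Noetherian (ℳ : GModData Γ R M) : Prop :=
  ∀ c : ℕ → AddSubgroup M, ℳ.TightAsc c → ∃ n, ∀ m, n ≤ m → c m = c n

end GModData

/-- `E` is a gr-injective graded right `R`-module: for all graded right `R`-modules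
`M`, `N`, every injective gr-homomorphism `g : N → M` and every gr-homomorphism
`h : N → E`, there is a gr-homomorphism `h' : M → E` with `h' ∘ g = h`. -/
def GrInjective {R : Type u} [AddCommGroup R] (𝒜 : GRingData Γ R) {E : Type u}
    [AddCommGroup E] (ℰ : GModData Γ R E) : Prop :=
  ∀ (M N : Type u) [AddCommGroup M] [AddCommGroup N]
    (ℳ : GModData Γ R M) (𝒩 : GModData Γ R N),
    ℳ.IsGraded 𝒜 → 𝒩.IsGraded 𝒜 →
    ∀ g : N → M, GModData.IsGrHom 𝒩 ℳ g → Function.Injective g →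
    ∀ h : N → E, GModData.IsGrHom 𝒩 ℰ h →
    ∃ h' : M → E, GModData.IsGrHom ℳ ℰ h' ∧ ∀ y : N, h' (g y) = h y

/-- A bundled `Γ`-graded right module over the graded ring `𝒜`. -/
structure GrModule (Γ : Type u) [Groupoid.{u} Γ] {R : Type u} [AddCommGroup R]
    (𝒜 : GRingData Γ R) : Type (u + 1) where
  carrier : Type u
  [addCommGroup : AddCommGroup carrier]
  data : GModData Γ R carrier
  graded : data.IsGraded 𝒜

attribute [instance] GrModule.addCommGroup

namespace GRingData

variable {R : Type u} [AddCommGroup R]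

/-- `R` is right `Γ₀`-noetherian. -/
def RightG0Noetherian (𝒜 : GRingData Γ R) : Prop := 𝒜.toMod.G0Noetherian

/-- `R` is right `Γ₀`-artinian. -/
def RightG0Artinian (𝒜 : GRingData Γ R) : Prop := 𝒜.toMod.G0Artinian

/-- The principal right ideal `aR`. -/
def principal (𝒜 : GRingData Γ R) (a : R) : AddSubgroup R :=
  AddSubgroup.closure {x : R | ∃ b : R, x = 𝒜.mul a b}

/-- A gr-principal graded right ideal: one of the form `aR` with `a` homogeneous. -/
def IsGrPrincipal (𝒜 : GRingData Γ R) (N : AddSubgroup R) : Prop :=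
  ∃ a : R, 𝒜.toMod.IsHomogeneous a ∧ N = 𝒜.principal a

/-- `N` is a graded left ideal of `R`, i.e. a graded submodule of `_R R`. -/
def IsGrLeftIdeal (𝒜 : GRingData Γ R) (N : AddSubgroup R) : Prop :=
  (∀ m ∈ N, ∀ a : R, 𝒜.mul a m ∈ N) ∧
  ∀ n ∈ N, n ∈ AddSubgroup.closure {x : R | x ∈ N ∧ 𝒜.toMod.IsHomogeneous x}

/-- `N` is a gr-maximal graded left ideal of `R`. -/
def IsGrMaxLeftIdeal (𝒜 : GRingData Γ R) (N : AddSubgroup R) : Prop :=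
  𝒜.IsGrLeftIdeal N ∧ N ≠ ⊤ ∧
    ∀ L : AddSubgroup R, 𝒜.IsGrLeftIdeal L → N ≤ L → L = N ∨ L = ⊤

/-- The graded Jacobson radical of `R` as a left module over itself:
the intersection of all gr-maximal graded left ideals. -/
def lRad (𝒜 : GRingData Γ R) : AddSubgroup R := sInf {N | 𝒜.IsGrMaxLeftIdeal N}

/-- `N` is a graded (two-sided) ideal of `R`. -/
def IsGrIdeal (𝒜 : GRingData Γ R) (N : AddSubgroup R) : Prop :=
  𝒜.toMod.IsGrSub N ∧ ∀ m ∈ N, ∀ a : R, 𝒜.mul a m ∈ N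

/-- `N ⊆ R_e` is a left ideal of the unital ring `R_e`. -/
def IsLeftIdealIn (𝒜 : GRingData Γ R) (e : Γ) (N : Set R) : Prop :=
  N ⊆ (𝒜.component (𝟙 e) : Set R) ∧ (0 : R) ∈ N ∧
  (∀ a ∈ N, ∀ b ∈ N, a - b ∈ N) ∧
  ∀ r ∈ 𝒜.component (𝟙 e), ∀ a ∈ N, 𝒜.mul r a ∈ N

/-- `N` is a maximal left ideal of the unital ring `R_e`. -/
def IsMaxLeftIdealIn (𝒜 : GRingData Γ R) (e : Γ) (N : Set R) : Prop :=
  𝒜.IsLeftIdealIn e N ∧ N ≠ (𝒜.component (𝟙 e) : Set R) ∧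
  ∀ L : Set R, 𝒜.IsLeftIdealIn e L → N ⊆ L →
    L = N ∨ L = (𝒜.component (𝟙 e) : Set R)

/-- The Jacobson radical `rad(R_e)` of the unital ring `R_e`, as a subset of `R`:
the intersection of all maximal left ideals of `R_e`. -/
def radIn (𝒜 : GRingData Γ R) (e : Γ) : Set R :=
  (𝒜.component (𝟙 e) : Set R) ∩ ⋂₀ {N : Set R | 𝒜.IsMaxLeftIdealIn e N}

/-- The quotient graded ring `R/I` of `R` by a graded ideal `I`. -/
noncomputable def quotRing (𝒜 : GRingData Γ R) (I : AddSubgroup R) :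
    GRingData Γ (R ⧸ I) where
  mul x y := QuotientAddGroup.mk (𝒜.mul (Quotient.out x) (Quotient.out y))
  component := fun γ => (𝒜.component γ).map (QuotientAddGroup.mk' I)
  one e := QuotientAddGroup.mk (𝒜.one e)

/-- `R` is a gr-semisimple ring. -/
def GrSemisimpleRing (𝒜 : GRingData Γ R) : Prop := 𝒜.toMod.GrSemisimple

/-- `R` is gr-semilocal: the `Γ`-graded ring `R/rad^gr(R)` is gr-semisimple. -/
noncomputable def GrSemilocal (𝒜 : GRingData Γ R) : Prop :=
  ((𝒜.quotRing 𝒜.toMod.grRad).GrSemisimpleRing)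

end GRingData


section Infrastructure
open scoped Classical
set_option linter.unusedSectionVars false
set_option linter.unusedVariables false
namespace GModData
variable {Γ : Type u} [Groupoid.{u} Γ] {R : Type u} {M : Type u}
  [AddCommGroup R] [AddCommGroup M]
variable {𝒜 : GRingData Γ R} {ℳ : GModData Γ R M}



theorem sum_eq_unique (hℳ : ℳ.IsGraded 𝒜) {s t : Finset (GrIdx Γ)}
    {cf df : GrIdx Γ → M}
    (hcf : ∀ γ ∈ s, cf γ ∈ ℳ.component γ.2.2)
    (hdf : ∀ γ ∈ t, df γ ∈ ℳ.component γ.2.2)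
    (h : ∑ γ ∈ s, cf γ = ∑ γ ∈ t, df γ) :
    ∀ γ, (if γ ∈ s then cf γ else 0) = (if γ ∈ t then df γ else 0) := by
  classical
  set g : GrIdx Γ → M :=
    fun γ => (if γ ∈ s then cf γ else 0) - (if γ ∈ t then df γ else 0) with hgdef
  have hg : ∀ γ ∈ s ∪ t, g γ ∈ ℳ.component γ.2.2 := by
    intro γ _
    refine sub_mem ?_ ?_
    · by_cases h1 : γ ∈ s
      · rw [if_pos h1]; exact hcf _ h1
      · rw [if_neg h1]; exact zero_mem _
    · by_cases h2 : γ ∈ t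
      · rw [if_pos h2]; exact hdf _ h2
      · rw [if_neg h2]; exact zero_mem _
  have hsum : ∑ γ ∈ s ∪ t, g γ = 0 := by
    have h1 : ∑ γ ∈ s ∪ t, (if γ ∈ s then cf γ else 0) = ∑ γ ∈ s, cf γ := by
      rw [Finset.sum_ite_mem, Finset.union_inter_cancel_left]
    have h2 : ∑ γ ∈ s ∪ t, (if γ ∈ t then df γ else 0) = ∑ γ ∈ t, df γ := by
      rw [Finset.sum_ite_mem, Finset.union_inter_cancel_right]
    rw [hgdef, Finset.sum_sub_distrib, h1, h2, h, sub_self]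
  intro γ
  by_cases hγ : γ ∈ s ∪ t
  · have := hℳ.independent (s ∪ t) g hg hsum γ hγ
    rwa [hgdef, sub_eq_zero] at this
  · rw [Finset.mem_union] at hγ
    push_neg at hγ
    rw [if_neg hγ.1, if_neg hγ.2]

noncomputable def decS (hℳ : ℳ.IsGraded 𝒜) (x : M) : Finset (GrIdx Γ) :=
  (hℳ.decompose x).choose

open Classical in
noncomputable def comps (hℳ : ℳ.IsGraded 𝒜) (x : M) (γ : GrIdx Γ) : M :=
  if γ ∈ decS hℳ x then (hℳ.decompose x).choose_spec.choose γ else 0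

theorem comps_mem (hℳ : ℳ.IsGraded 𝒜) (x : M) (γ : GrIdx Γ) :
    comps hℳ x γ ∈ ℳ.component γ.2.2 := by
  unfold comps
  split
  · exact (hℳ.decompose x).choose_spec.choose_spec.1 _ ‹_›
  · exact zero_mem _

theorem sum_comps (hℳ : ℳ.IsGraded 𝒜) (x : M) :
    ∑ γ ∈ decS hℳ x, comps hℳ x γ = x := by
  classical
  conv_rhs => rw [(hℳ.decompose x).choose_spec.choose_spec.2]
  refine Finset.sum_congr rfl fun γ hγ => ?_
  unfold comps
  rw [if_pos (show γ ∈ decS hℳ x from hγ)]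

theorem comps_unique (hℳ : ℳ.IsGraded 𝒜) {x : M} {s : Finset (GrIdx Γ)}
    {cf : GrIdx Γ → M} (hcf : ∀ γ ∈ s, cf γ ∈ ℳ.component γ.2.2)
    (h : x = ∑ γ ∈ s, cf γ) (γ : GrIdx Γ) :
    comps hℳ x γ = if γ ∈ s then cf γ else 0 := by
  classical
  have key := sum_eq_unique hℳ (fun γ hγ => comps_mem hℳ x γ) hcf
    (by rw [sum_comps hℳ x, h]) γ
  rw [← key]
  by_cases hγ : γ ∈ decS hℳ x
  · rw [if_pos hγ]
  · rw [if_neg hγ]; unfold comps; rw [if_neg hγ]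

theorem comps_zero (hℳ : ℳ.IsGraded 𝒜) (γ : GrIdx Γ) : comps hℳ (0 : M) γ = 0 := by
  classical
  have := comps_unique hℳ (x := (0 : M)) (s := (∅ : Finset (GrIdx Γ)))
    (cf := fun _ => 0) (by simp) (by simp) γ
  simpa using this

theorem comps_add (hℳ : ℳ.IsGraded 𝒜) (x y : M) (γ : GrIdx Γ) :
    comps hℳ (x + y) γ = comps hℳ x γ + comps hℳ y γ := by
  classical
  have hmem : ∀ δ ∈ decS hℳ x ∪ decS hℳ y,
      comps hℳ x δ + comps hℳ y δ ∈ ℳ.component δ.2.2 :=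
    fun δ _ => add_mem (comps_mem hℳ x δ) (comps_mem hℳ y δ)
  have hx : ∑ δ ∈ decS hℳ x ∪ decS hℳ y, comps hℳ x δ = x := by
    refine Eq.trans ?_ (sum_comps hℳ x)
    refine (Finset.sum_subset Finset.subset_union_left ?_).symm
    intro δ _ hδ; unfold comps; rw [if_neg hδ]
  have hy : ∑ δ ∈ decS hℳ x ∪ decS hℳ y, comps hℳ y δ = y := by
    refine Eq.trans ?_ (sum_comps hℳ y)
    refine (Finset.sum_subset Finset.subset_union_right ?_).symm
    intro δ _ hδ; unfold comps; rw [if_neg hδ]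
  have hsum : x + y = ∑ δ ∈ decS hℳ x ∪ decS hℳ y,
      (comps hℳ x δ + comps hℳ y δ) := by
    rw [Finset.sum_add_distrib, hx, hy]
  have := comps_unique hℳ hmem hsum γ
  rw [this]
  split
  · rfl
  · rename_i hγ
    rw [Finset.mem_union] at hγ; push_neg at hγ
    unfold comps
    rw [if_neg hγ.1, if_neg hγ.2, add_zero]

theorem comps_neg (hℳ : ℳ.IsGraded 𝒜) (x : M) (γ : GrIdx Γ) :
    comps hℳ (-x) γ = -comps hℳ x γ := by
  have := comps_add hℳ x (-x) γ
  rw [add_neg_cancel, comps_zero] at this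
  exact (add_eq_zero_iff_neg_eq.mp this.symm).symm

theorem comps_of_mem (hℳ : ℳ.IsGraded 𝒜) {e f : Γ} {δ : e ⟶ f} {x : M}
    (hx : x ∈ ℳ.component δ) (γ : GrIdx Γ) :
    comps hℳ x γ = if γ = ⟨e, f, δ⟩ then x else 0 := by
  classical
  have := comps_unique hℳ (x := x) (s := {(⟨e, f, δ⟩ : GrIdx Γ)}) (cf := fun _ => x)
    (by intro γ hγ; simp at hγ; subst hγ; exact hx) (by simp) γ
  simpa using this

theorem comps_self (hℳ : ℳ.IsGraded 𝒜) {e f : Γ} {δ : e ⟶ f} {x : M}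
    (hx : x ∈ ℳ.component δ) : comps hℳ x ⟨e, f, δ⟩ = x := by
  rw [comps_of_mem hℳ hx, if_pos rfl]


/-! ### smul arithmetic helpers -/

theorem smul_zero_left (hℳ : ℳ.IsGraded 𝒜) (a : R) : ℳ.smul 0 a = 0 := by
  have := hℳ.add_smul 0 0 a
  rw [add_zero] at this
  exact (add_eq_right.mp this.symm)

theorem smul_neg_left (hℳ : ℳ.IsGraded 𝒜) (m : M) (a : R) :
    ℳ.smul (-m) a = -(ℳ.smul m a) := by
  have := hℳ.add_smul m (-m) a
  rw [add_neg_cancel, smul_zero_left hℳ] at this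
  exact (add_eq_zero_iff_neg_eq.mp this.symm).symm

theorem smul_sub_left (hℳ : ℳ.IsGraded 𝒜) (m n : M) (a : R) :
    ℳ.smul (m - n) a = ℳ.smul m a - ℳ.smul n a := by
  rw [sub_eq_add_neg, hℳ.add_smul, smul_neg_left hℳ, sub_eq_add_neg]

theorem smul_sum_left (hℳ : ℳ.IsGraded 𝒜) {ι : Type*} (s : Finset ι)
    (f : ι → M) (a : R) :
    ℳ.smul (∑ i ∈ s, f i) a = ∑ i ∈ s, ℳ.smul (f i) a := by
  classical
  induction s using Finset.induction_on with
  | empty => simpa using smul_zero_left hℳ a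
  | insert _ _ h ih =>
    rw [Finset.sum_insert h, Finset.sum_insert h, hℳ.add_smul, ih]

theorem smul_zero_right (hℳ : ℳ.IsGraded 𝒜) (m : M) : ℳ.smul m 0 = 0 := by
  have := hℳ.smul_add m 0 0
  rw [add_zero] at this
  exact (add_eq_right.mp this.symm)

theorem smul_sum_right (hℳ : ℳ.IsGraded 𝒜) {ι : Type*} (s : Finset ι)
    (m : M) (f : ι → R) :
    ℳ.smul m (∑ i ∈ s, f i) = ∑ i ∈ s, ℳ.smul m (f i) := by
  classical
  induction s using Finset.induction_on with
  | empty => simpa using smul_zero_right hℳ m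
  | insert _ _ h ih =>
    rw [Finset.sum_insert h, Finset.sum_insert h, hℳ.smul_add, ih]

/-! ### graded submodules via comps -/

theorem isGrSub_iff (hℳ : ℳ.IsGraded 𝒜) {N : AddSubgroup M} :
    ℳ.IsGrSub N ↔ ((∀ m ∈ N, ∀ a : R, ℳ.smul m a ∈ N) ∧
      ∀ x ∈ N, ∀ γ : GrIdx Γ, comps hℳ x γ ∈ N) := by
  constructor
  · rintro ⟨h1, h2⟩
    refine ⟨h1, fun x hx γ => ?_⟩
    have hx' := h2 x hx
    clear hx
    induction hx' using AddSubgroup.closure_induction with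
    | mem y hy =>
      obtain ⟨hyN, e, f, δ, hyc⟩ := hy
      rw [comps_of_mem hℳ hyc γ]
      split
      · exact hyN
      · exact zero_mem N
    | zero => rw [comps_zero hℳ]; exact zero_mem N
    | add y z _ _ hy hz => rw [comps_add hℳ]; exact add_mem hy hz
    | neg y _ hy => rw [comps_neg hℳ]; exact neg_mem hy
  · rintro ⟨h1, h2⟩
    refine ⟨h1, fun n hn => ?_⟩
    have : n = ∑ γ ∈ decS hℳ n, comps hℳ n γ := (sum_comps hℳ n).symm
    rw [this]
    refine AddSubgroup.sum_mem _ fun γ _ => AddSubgroup.subset_closure ?_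
    exact ⟨h2 n hn γ, γ.1, γ.2.1, γ.2.2, comps_mem hℳ n γ⟩

theorem IsGrSub.smul_mem' {N : AddSubgroup M} (h : ℳ.IsGrSub N) :
    ∀ m ∈ N, ∀ a : R, ℳ.smul m a ∈ N := h.1

theorem IsGrSub.comps_mem' (hℳ : ℳ.IsGraded 𝒜) {N : AddSubgroup M}
    (h : ℳ.IsGrSub N) {x : M} (hx : x ∈ N) (γ : GrIdx Γ) :
    comps hℳ x γ ∈ N := ((isGrSub_iff hℳ).mp h).2 x hx γ

theorem isGrSub_of (hℳ : ℳ.IsGraded 𝒜) {N : AddSubgroup M}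
    (h1 : ∀ m ∈ N, ∀ a : R, ℳ.smul m a ∈ N)
    (h2 : ∀ x ∈ N, ∀ γ : GrIdx Γ, comps hℳ x γ ∈ N) : ℳ.IsGrSub N :=
  (isGrSub_iff hℳ).mpr ⟨h1, h2⟩

theorem isGrSub_bot (hℳ : ℳ.IsGraded 𝒜) : ℳ.IsGrSub (⊥ : AddSubgroup M) := by
  refine isGrSub_of hℳ ?_ ?_
  · intro m hm a
    rw [AddSubgroup.mem_bot] at hm ⊢
    rw [hm, smul_zero_left hℳ]
  · intro x hx γ
    rw [AddSubgroup.mem_bot] at hx ⊢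
    rw [hx, comps_zero hℳ]

theorem isGrSub_top (hℳ : ℳ.IsGraded 𝒜) : ℳ.IsGrSub (⊤ : AddSubgroup M) :=
  isGrSub_of hℳ (fun _ _ _ => trivial) (fun _ _ _ => trivial)

theorem isGrSub_inf (hℳ : ℳ.IsGraded 𝒜) {N P : AddSubgroup M}
    (hN : ℳ.IsGrSub N) (hP : ℳ.IsGrSub P) : ℳ.IsGrSub (N ⊓ P) :=
  isGrSub_of hℳ
    (fun m hm a => ⟨hN.1 m hm.1 a, hP.1 m hm.2 a⟩)
    (fun x hx γ => ⟨hN.comps_mem' hℳ hx.1 γ, hP.comps_mem' hℳ hx.2 γ⟩)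

theorem isGrSub_iSup (hℳ : ℳ.IsGraded 𝒜) {ι : Sort*} {N : ι → AddSubgroup M}
    (hN : ∀ i, ℳ.IsGrSub (N i)) : ℳ.IsGrSub (⨆ i, N i) := by
  refine isGrSub_of hℳ ?_ ?_
  · intro m hm a
    rw [AddSubgroup.iSup_eq_closure] at hm ⊢
    induction hm using AddSubgroup.closure_induction with
    | mem y hy =>
      obtain ⟨_, ⟨i, rfl⟩, hyi⟩ := hy
      exact AddSubgroup.subset_closure ⟨_, ⟨i, rfl⟩, (hN i).1 y hyi a⟩
    | zero => rw [smul_zero_left hℳ]; exact zero_mem _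
    | add y z _ _ hy hz => rw [hℳ.add_smul]; exact add_mem hy hz
    | neg y _ hy => rw [smul_neg_left hℳ]; exact neg_mem hy
  · intro x hx γ
    rw [AddSubgroup.iSup_eq_closure] at hx ⊢
    induction hx using AddSubgroup.closure_induction with
    | mem y hy =>
      obtain ⟨_, ⟨i, rfl⟩, hyi⟩ := hy
      exact AddSubgroup.subset_closure ⟨_, ⟨i, rfl⟩, (hN i).comps_mem' hℳ hyi γ⟩
    | zero => rw [comps_zero hℳ]; exact zero_mem _
    | add y z _ _ hy hz => rw [comps_add hℳ]; exact add_mem hy hz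
    | neg y _ hy => rw [comps_neg hℳ]; exact neg_mem hy

theorem isGrSub_sup (hℳ : ℳ.IsGraded 𝒜) {N P : AddSubgroup M}
    (hN : ℳ.IsGrSub N) (hP : ℳ.IsGrSub P) : ℳ.IsGrSub (N ⊔ P) := by
  have : N ⊔ P = ⨆ b : Bool, (if b then N else P) := by
    rw [iSup_bool_eq]; simp
  rw [this]
  exact isGrSub_iSup hℳ (fun b => by cases b <;> simp [hN, hP])


/-! ### parts -/

theorem part_eq (e : Γ) :
    ℳ.part e = ⨆ p : (Σ f : Γ, f ⟶ e), ℳ.component p.2 := by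
  rw [part, iSup_sigma]

theorem component_le_part {f e : Γ} (γ : f ⟶ e) : ℳ.component γ ≤ ℳ.part e := by
  rw [part_eq]
  exact le_iSup (fun p : (Σ f : Γ, f ⟶ e) => ℳ.component p.2) ⟨f, γ⟩

theorem mem_part_iff (hℳ : ℳ.IsGraded 𝒜) {e : Γ} {x : M} :
    x ∈ ℳ.part e ↔ ∀ γ : GrIdx Γ, γ.2.1 ≠ e → comps hℳ x γ = 0 := by
  constructor
  · intro hx
    rw [part_eq, AddSubgroup.iSup_eq_closure] at hx
    induction hx using AddSubgroup.closure_induction with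
    | mem y hy =>
      obtain ⟨_, ⟨⟨f, δ⟩, rfl⟩, hyδ⟩ := hy
      intro γ hγ
      rw [comps_of_mem hℳ hyδ γ, if_neg]
      rintro rfl
      exact hγ rfl
    | zero => intro γ _; rw [comps_zero hℳ]
    | add y z _ _ hy hz =>
      intro γ hγ
      rw [comps_add hℳ, hy γ hγ, hz γ hγ, add_zero]
    | neg y _ hy =>
      intro γ hγ
      rw [comps_neg hℳ, hy γ hγ, neg_zero]
  · intro h
    have : x = ∑ γ ∈ decS hℳ x, comps hℳ x γ := (sum_comps hℳ x).symm
    rw [this]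
    refine AddSubgroup.sum_mem _ fun γ _ => ?_
    by_cases hγ : γ.2.1 = e
    · have := comps_mem hℳ x γ
      have hle : ℳ.component γ.2.2 ≤ ℳ.part e := hγ ▸ component_le_part γ.2.2
      exact hle this
    · rw [h γ hγ]; exact zero_mem _

theorem homog_smul_mem_part (h𝒜 : 𝒜.IsObjectUnital) (hℳ : ℳ.IsGraded 𝒜)
    {e f : Γ} {γ : f ⟶ e} {m : M} (hm : m ∈ ℳ.component γ) (a : R) :
    ℳ.smul m a ∈ ℳ.part e := by
  obtain ⟨s, cf, hcf, rfl⟩ := h𝒜.decompose a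
  rw [smul_sum_right hℳ]
  refine AddSubgroup.sum_mem _ fun τ hτ => ?_
  obtain ⟨g, h, τm⟩ := τ
  by_cases hh : h = f
  · subst hh
    exact component_le_part _ (hℳ.smul_mem γ τm hm (hcf _ hτ))
  · rw [hℳ.smul_eq_zero γ τm hh hm (hcf _ hτ)]
    exact zero_mem _

theorem part_isGrSub (h𝒜 : 𝒜.IsObjectUnital) (hℳ : ℳ.IsGraded 𝒜) (e : Γ) :
    ℳ.IsGrSub (ℳ.part e) := by
  refine isGrSub_of hℳ ?_ ?_
  · intro m hm a
    have : m = ∑ γ ∈ decS hℳ m, comps hℳ m γ := (sum_comps hℳ m).symm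
    rw [this, smul_sum_left hℳ]
    refine AddSubgroup.sum_mem _ fun γ hγ => ?_
    by_cases hγe : γ.2.1 = e
    · have hc : comps hℳ m γ ∈ ℳ.component γ.2.2 := comps_mem hℳ m γ
      subst hγe
      exact homog_smul_mem_part h𝒜 hℳ hc a
    · rw [(mem_part_iff hℳ).mp hm γ hγe, smul_zero_left hℳ]
      exact zero_mem _
  · intro x hx γ
    by_cases hγe : γ.2.1 = e
    · have hle : ℳ.component γ.2.2 ≤ ℳ.part e := hγe ▸ component_le_part γ.2.2
      exact hle (comps_mem hℳ x γ)
    · rw [(mem_part_iff hℳ).mp hx γ hγe]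
      exact zero_mem _

theorem component_inf_part_eq_bot (hℳ : ℳ.IsGraded 𝒜) {f g e : Γ}
    (γ : f ⟶ g) (hg : g ≠ e) : ℳ.component γ ⊓ ℳ.part e = ⊥ := by
  rw [eq_bot_iff]
  rintro x ⟨hx1, hx2⟩
  have h1 := comps_self hℳ hx1
  have h2 := (mem_part_iff hℳ).mp hx2 ⟨f, g, γ⟩ hg
  rw [AddSubgroup.mem_bot, ← h1, h2]

theorem mem_part_of_mem_component (hℳ : ℳ.IsGraded 𝒜) {f e : Γ} {γ : f ⟶ e}
    {x : M} (hx : x ∈ ℳ.component γ) : x ∈ ℳ.part e := component_le_part γ hx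


/-! ### restrict -/

theorem restrict_component (P : AddSubgroup M) {e f : Γ} (γ : e ⟶ f) :
    (ℳ.restrict P).component γ = (ℳ.component γ).addSubgroupOf P := rfl

theorem restrict_smul {P : AddSubgroup M} (hP : ∀ m ∈ P, ∀ a : R, ℳ.smul m a ∈ P)
    (m : ↥P) (a : R) :
    (ℳ.restrict P).smul m a = ⟨ℳ.smul (↑m) a, hP _ m.2 a⟩ := by
  unfold restrict
  simp only [dif_pos (hP _ m.2 a)]

theorem restrict_isGraded (hℳ : ℳ.IsGraded 𝒜) {P : AddSubgroup M}
    (hP : ℳ.IsGrSub P) : (ℳ.restrict P).IsGraded 𝒜 := by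
  have hsP := hP.1
  refine ⟨?_, ?_, ?_, ?_, ?_, ?_, ?_, ?_⟩
  · intro m n a
    ext
    simp only [restrict_smul hsP, AddSubgroup.coe_add, hℳ.add_smul]
  · intro m a b
    ext
    simp only [restrict_smul hsP, AddSubgroup.coe_add, hℳ.smul_add]
  · intro m a b
    ext
    simp only [restrict_smul hsP, hℳ.smul_mul]
  · intro x
    refine ⟨decS hℳ (x : M), fun γ => ⟨comps hℳ (x : M) γ,
      hP.comps_mem' hℳ x.2 γ⟩, fun γ _ => ?_, ?_⟩
    · rw [restrict_component, AddSubgroup.mem_addSubgroupOf]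
      exact comps_mem hℳ _ γ
    · ext
      conv_lhs => rw [← sum_comps hℳ (x : M)]
      push_cast
      rfl
  · intro s cf hcf hsum γ hγ
    have : ∑ γ ∈ s, ((cf γ : M)) = 0 := by
      have := congrArg (fun z : ↥P => (z : M)) hsum
      simpa using this
    have := hℳ.independent s (fun γ => (cf γ : M))
      (fun γ hγ => (AddSubgroup.mem_addSubgroupOf).mp (hcf γ hγ)) this γ hγ
    exact Subtype.ext this
  · intro e f g σ τ m a hm ha
    rw [restrict_component, AddSubgroup.mem_addSubgroupOf] at hm ⊢
    rw [restrict_smul hsP]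
    exact hℳ.smul_mem σ τ hm ha
  · intro e f g h σ τ m a hh hm ha
    rw [restrict_component, AddSubgroup.mem_addSubgroupOf] at hm
    have : ℳ.smul (↑m) a = 0 := hℳ.smul_eq_zero σ τ hh hm ha
    ext
    rw [restrict_smul hsP]
    exact this
  · intro e f σ m hm
    rw [restrict_component, AddSubgroup.mem_addSubgroupOf] at hm
    ext
    rw [restrict_smul hsP]
    exact hℳ.smul_one σ hm


theorem comps_restrict (hℳ : ℳ.IsGraded 𝒜) {P : AddSubgroup M}
    (hP : ℳ.IsGrSub P) (x : ↥P) (γ : GrIdx Γ) :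
    ((comps (restrict_isGraded hℳ hP) x γ : ↥P) : M) = comps hℳ (x : M) γ := by
  have hcf : ∀ δ ∈ decS hℳ (x : M), (⟨comps hℳ (x : M) δ, hP.comps_mem' hℳ x.2 δ⟩ : ↥P)
      ∈ (ℳ.restrict P).component δ.2.2 := by
    intro δ _
    rw [restrict_component, AddSubgroup.mem_addSubgroupOf]
    exact comps_mem hℳ _ δ
  have hx : x = ∑ δ ∈ decS hℳ (x : M),
      (⟨comps hℳ (x : M) δ, hP.comps_mem' hℳ x.2 δ⟩ : ↥P) := by
    ext
    conv_lhs => rw [← sum_comps hℳ (x : M)]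
    push_cast
    rfl
  have := comps_unique (restrict_isGraded hℳ hP) hcf hx γ
  rw [this]
  by_cases hγ : γ ∈ decS hℳ (x : M)
  · rw [if_pos hγ]
  · rw [if_neg hγ]
    unfold comps
    rw [if_neg hγ]
    rfl

theorem isGrSub_map_subtype (hℳ : ℳ.IsGraded 𝒜) {P : AddSubgroup M}
    (hP : ℳ.IsGrSub P) {A : AddSubgroup ↥P}
    (hA : (ℳ.restrict P).IsGrSub A) : ℳ.IsGrSub (A.map P.subtype) := by
  refine isGrSub_of hℳ ?_ ?_
  · rintro m ⟨a, ha, rfl⟩ r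
    refine ⟨(ℳ.restrict P).smul a r, hA.1 a ha r, ?_⟩
    rw [restrict_smul hP.1]
    rfl
  · rintro x ⟨a, ha, rfl⟩ γ
    exact ⟨comps (restrict_isGraded hℳ hP) a γ,
      hA.comps_mem' (restrict_isGraded hℳ hP) ha γ, comps_restrict hℳ hP a γ⟩

theorem isGrSub_addSubgroupOf (hℳ : ℳ.IsGraded 𝒜) {P B : AddSubgroup M}
    (hP : ℳ.IsGrSub P) (hB : ℳ.IsGrSub B) :
    (ℳ.restrict P).IsGrSub (B.addSubgroupOf P) := by
  refine isGrSub_of (restrict_isGraded hℳ hP) ?_ ?_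
  · intro m hm r
    rw [AddSubgroup.mem_addSubgroupOf] at hm ⊢
    rw [restrict_smul hP.1]
    exact hB.1 _ hm r
  · intro x hx γ
    rw [AddSubgroup.mem_addSubgroupOf] at hx ⊢
    rw [comps_restrict hℳ hP]
    exact hB.comps_mem' hℳ hx γ


/-! ### quot -/

theorem quot_component {N : AddSubgroup M} {e f : Γ} (γ : e ⟶ f) :
    (ℳ.quot N).component γ = (ℳ.component γ).map (QuotientAddGroup.mk' N) := rfl

theorem quot_smul_mk (hℳ : ℳ.IsGraded 𝒜) {N : AddSubgroup M}
    (hN : ∀ m ∈ N, ∀ a : R, ℳ.smul m a ∈ N) (y : M) (a : R) :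
    (ℳ.quot N).smul (y : M ⧸ N) a = ((ℳ.smul y a : M) : M ⧸ N) := by
  show ((ℳ.smul (Quotient.out ((y : M) : M ⧸ N)) a : M) : M ⧸ N) = _
  rw [QuotientAddGroup.eq_iff_sub_mem, ← smul_sub_left hℳ]
  refine hN _ ?_ a
  rw [← QuotientAddGroup.eq_iff_sub_mem]
  exact Quotient.out_eq _

theorem quot_isGraded (hℳ : ℳ.IsGraded 𝒜) {N : AddSubgroup M}
    (hN : ℳ.IsGrSub N) : (ℳ.quot N).IsGraded 𝒜 := by
  have hsN := hN.1
  refine ⟨?_, ?_, ?_, ?_, ?_, ?_, ?_, ?_⟩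
  · intro m n a
    induction m using QuotientAddGroup.induction_on with | _ u => ?_
    induction n using QuotientAddGroup.induction_on with | _ v => ?_
    rw [← QuotientAddGroup.mk_add, quot_smul_mk hℳ hsN, quot_smul_mk hℳ hsN,
      quot_smul_mk hℳ hsN, hℳ.add_smul, QuotientAddGroup.mk_add]
  · intro m a b
    induction m using QuotientAddGroup.induction_on with | _ u => ?_
    rw [quot_smul_mk hℳ hsN, quot_smul_mk hℳ hsN, quot_smul_mk hℳ hsN,
      hℳ.smul_add, QuotientAddGroup.mk_add]
  · intro m a b
    induction m using QuotientAddGroup.induction_on with | _ u => ?_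
    rw [quot_smul_mk hℳ hsN, quot_smul_mk hℳ hsN, quot_smul_mk hℳ hsN,
      hℳ.smul_mul]
  · intro x
    induction x using QuotientAddGroup.induction_on with | _ u => ?_
    refine ⟨decS hℳ u, fun γ => ((comps hℳ u γ : M) : M ⧸ N), fun γ _ => ?_, ?_⟩
    · rw [quot_component]
      exact ⟨comps hℳ u γ, comps_mem hℳ u γ, rfl⟩
    · conv_lhs => rw [← sum_comps hℳ u]
      exact (map_sum (QuotientAddGroup.mk' N) _ _)
  · intro s cf hcf hsum γ hγ
    have hz : ∀ δ : GrIdx Γ, ∃ z : M, z ∈ ℳ.component δ.2.2 ∧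
        (δ ∈ s → ((z : M) : M ⧸ N) = cf δ) := by
      intro δ
      by_cases hδ : δ ∈ s
      · obtain ⟨z, hz, hz2⟩ := AddSubgroup.mem_map.mp (hcf δ hδ)
        exact ⟨z, hz, fun _ => hz2⟩
      · exact ⟨0, zero_mem _, fun h => absurd h hδ⟩
    choose z hz1 hz2 using hz
    have hsum2 : ((∑ δ ∈ s, z δ : M) : M ⧸ N) = 0 := by
      rw [show ((∑ δ ∈ s, z δ : M) : M ⧸ N) = ∑ δ ∈ s, ((z δ : M) : M ⧸ N) from
        map_sum (QuotientAddGroup.mk' N) _ _]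
      rw [Finset.sum_congr rfl (fun δ hδ => hz2 δ hδ), hsum]
    have hmem : ∑ δ ∈ s, z δ ∈ N := (QuotientAddGroup.eq_zero_iff _).mp hsum2
    have hcomps := hN.comps_mem' hℳ hmem γ
    have hcu : comps hℳ (∑ δ ∈ s, z δ) γ = if γ ∈ s then z γ else 0 :=
      comps_unique hℳ (fun δ _ => hz1 δ) rfl γ
    rw [hcu, if_pos hγ] at hcomps
    rw [← hz2 γ hγ]
    exact (QuotientAddGroup.eq_zero_iff _).mpr hcomps
  · intro e f g σ τ m a hm ha
    rw [quot_component] at hm ⊢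
    obtain ⟨u, hu, rfl⟩ := AddSubgroup.mem_map.mp hm
    rw [show ((QuotientAddGroup.mk' N) u) = ((u : M) : M ⧸ N) from rfl,
      quot_smul_mk hℳ hsN]
    exact ⟨ℳ.smul u a, hℳ.smul_mem σ τ hu ha, rfl⟩
  · intro e f g h σ τ m a hh hm ha
    rw [quot_component] at hm
    obtain ⟨u, hu, rfl⟩ := AddSubgroup.mem_map.mp hm
    rw [show ((QuotientAddGroup.mk' N) u) = ((u : M) : M ⧸ N) from rfl,
      quot_smul_mk hℳ hsN, hℳ.smul_eq_zero σ τ hh hu ha]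
    rfl
  · intro e f σ m hm
    rw [quot_component] at hm
    obtain ⟨u, hu, rfl⟩ := AddSubgroup.mem_map.mp hm
    rw [show ((QuotientAddGroup.mk' N) u) = ((u : M) : M ⧸ N) from rfl,
      quot_smul_mk hℳ hsN, hℳ.smul_one σ hu]

theorem comps_quot (hℳ : ℳ.IsGraded 𝒜) {N : AddSubgroup M}
    (hN : ℳ.IsGrSub N) (u : M) (γ : GrIdx Γ) :
    comps (quot_isGraded hℳ hN) ((u : M) : M ⧸ N) γ = ((comps hℳ u γ : M) : M ⧸ N) := by
  have hcf : ∀ δ ∈ decS hℳ u, ((comps hℳ u δ : M) : M ⧸ N)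
      ∈ (ℳ.quot N).component δ.2.2 := by
    intro δ _
    rw [quot_component]
    exact ⟨comps hℳ u δ, comps_mem hℳ u δ, rfl⟩
  have hx : ((u : M) : M ⧸ N) = ∑ δ ∈ decS hℳ u, ((comps hℳ u δ : M) : M ⧸ N) := by
    conv_lhs => rw [← sum_comps hℳ u]
    exact map_sum (QuotientAddGroup.mk' N) _ _
  have := comps_unique (quot_isGraded hℳ hN) hcf hx γ
  rw [this]
  by_cases hγ : γ ∈ decS hℳ u
  · rw [if_pos hγ]
  · rw [if_neg hγ]
    unfold comps
    rw [if_neg hγ]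
    rfl

theorem isGrSub_map_mk' (hℳ : ℳ.IsGraded 𝒜) {N : AddSubgroup M}
    (hN : ℳ.IsGrSub N) {L : AddSubgroup M} (hL : ℳ.IsGrSub L) :
    (ℳ.quot N).IsGrSub (L.map (QuotientAddGroup.mk' N)) := by
  refine isGrSub_of (quot_isGraded hℳ hN) ?_ ?_
  · rintro m ⟨u, hu, rfl⟩ a
    rw [show ((QuotientAddGroup.mk' N) u) = ((u : M) : M ⧸ N) from rfl,
      quot_smul_mk hℳ hN.1]
    exact ⟨ℳ.smul u a, hL.1 u hu a, rfl⟩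
  · rintro x ⟨u, hu, rfl⟩ γ
    rw [show ((QuotientAddGroup.mk' N) u) = ((u : M) : M ⧸ N) from rfl,
      comps_quot hℳ hN]
    exact ⟨comps hℳ u γ, hL.comps_mem' hℳ hu γ, rfl⟩

theorem isGrSub_comap_mk' (hℳ : ℳ.IsGraded 𝒜) {N : AddSubgroup M}
    (hN : ℳ.IsGrSub N) {K : AddSubgroup (M ⧸ N)} (hK : (ℳ.quot N).IsGrSub K) :
    ℳ.IsGrSub (K.comap (QuotientAddGroup.mk' N)) := by
  refine isGrSub_of hℳ ?_ ?_
  · intro m hm a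
    rw [AddSubgroup.mem_comap] at hm ⊢
    rw [show ((QuotientAddGroup.mk' N) (ℳ.smul m a)) = ((ℳ.smul m a : M) : M ⧸ N) from rfl,
      ← quot_smul_mk hℳ hN.1]
    exact hK.1 _ hm a
  · intro x hx γ
    rw [AddSubgroup.mem_comap] at hx ⊢
    rw [show ((QuotientAddGroup.mk' N) (comps hℳ x γ)) = ((comps hℳ x γ : M) : M ⧸ N) from rfl,
      ← comps_quot hℳ hN]
    exact hK.comps_mem' (quot_isGraded hℳ hN) hx γ


/-! ### subquot -/

section Subquot

variable {N P : AddSubgroup M}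

theorem subquot_isGraded (hℳ : ℳ.IsGraded 𝒜) (hN : ℳ.IsGrSub N)
    (hP : ℳ.IsGrSub P) : (ℳ.subquot N P).IsGraded 𝒜 :=
  quot_isGraded (restrict_isGraded hℳ hP) (isGrSub_addSubgroupOf hℳ hP hN)

theorem addSubgroupOf_le_addSubgroupOf_iff {A B : AddSubgroup M} :
    A.addSubgroupOf P ≤ B.addSubgroupOf P ↔ A ⊓ P ≤ B ⊓ P := by
  constructor
  · rintro h x ⟨hx1, hx2⟩
    refine ⟨?_, hx2⟩
    have := h (show (⟨x, hx2⟩ : ↥P) ∈ A.addSubgroupOf P from hx1)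
    exact this
  · intro h x hx
    rw [AddSubgroup.mem_addSubgroupOf] at hx ⊢
    exact (h ⟨hx, x.2⟩).1

theorem subquot_top_ne_bot_iff :
    ((⊤ : AddSubgroup (↥P ⧸ N.addSubgroupOf P)) ≠ ⊥) ↔ ¬ P ≤ N := by
  rw [not_iff_not]
  constructor
  · intro h p hp
    have hx : ((⟨p, hp⟩ : ↥P) : ↥P ⧸ N.addSubgroupOf P) ∈ (⊥ : AddSubgroup _) := by
      rw [← h]; trivial
    rw [AddSubgroup.mem_bot, QuotientAddGroup.eq_zero_iff,
      AddSubgroup.mem_addSubgroupOf] at hx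
    exact hx
  · intro h
    rw [eq_bot_iff]
    rintro x -
    induction x using QuotientAddGroup.induction_on with | _ z => ?_
    rw [AddSubgroup.mem_bot, QuotientAddGroup.eq_zero_iff,
      AddSubgroup.mem_addSubgroupOf]
    exact h z.2

theorem corr_eq_bot_iff {L : AddSubgroup M} (hNP : N ≤ P) :
    (L.addSubgroupOf P).map (QuotientAddGroup.mk' (N.addSubgroupOf P)) = ⊥ ↔
      L ⊓ P ≤ N := by
  rw [AddSubgroup.map_eq_bot_iff, QuotientAddGroup.ker_mk',
    addSubgroupOf_le_addSubgroupOf_iff]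
  constructor
  · intro h x hx
    exact (h hx).1
  · intro h x hx
    exact ⟨h hx, hx.2⟩

theorem corr_eq_top_iff {L : AddSubgroup M} (hNL : N ≤ L) :
    (L.addSubgroupOf P).map (QuotientAddGroup.mk' (N.addSubgroupOf P)) = ⊤ ↔
      P ≤ L := by
  constructor
  · intro h
    have h2 := congrArg (AddSubgroup.comap (QuotientAddGroup.mk' (N.addSubgroupOf P))) h
    rw [AddSubgroup.comap_map_eq, QuotientAddGroup.ker_mk', AddSubgroup.comap_top] at h2
    have hsub : N.addSubgroupOf P ≤ L.addSubgroupOf P := by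
      intro x hx
      rw [AddSubgroup.mem_addSubgroupOf] at hx ⊢
      exact hNL hx
    rw [sup_of_le_left hsub] at h2
    intro p hp
    have : (⟨p, hp⟩ : ↥P) ∈ L.addSubgroupOf P := h2 ▸ trivial
    rwa [AddSubgroup.mem_addSubgroupOf] at this
  · intro h
    have : L.addSubgroupOf P = ⊤ := by
      rw [eq_top_iff]
      rintro x -
      rw [AddSubgroup.mem_addSubgroupOf]
      exact h x.2
    rw [this]
    exact AddSubgroup.map_top_of_surjective _ (QuotientAddGroup.mk'_surjective _)

theorem isGrSub_corr (hℳ : ℳ.IsGraded 𝒜) (hN : ℳ.IsGrSub N) (hP : ℳ.IsGrSub P)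
    {L : AddSubgroup M} (hL : ℳ.IsGrSub L) :
    (ℳ.subquot N P).IsGrSub
      ((L.addSubgroupOf P).map (QuotientAddGroup.mk' (N.addSubgroupOf P))) :=
  isGrSub_map_mk' (restrict_isGraded hℳ hP) (isGrSub_addSubgroupOf hℳ hP hN)
    (isGrSub_addSubgroupOf hℳ hP hL)

theorem isGrSimple_subquot_iff (hℳ : ℳ.IsGraded 𝒜) (hN : ℳ.IsGrSub N)
    (hP : ℳ.IsGrSub P) (hNP : N ≤ P) :
    (ℳ.subquot N P).IsGrSimple ↔ (¬ P ≤ N ∧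
      ∀ L : AddSubgroup M, ℳ.IsGrSub L → N ≤ L → L ≤ P → L = N ∨ L = P) := by
  constructor
  · rintro ⟨h1, h2⟩
    refine ⟨subquot_top_ne_bot_iff.mp h1, fun L hL hNL hLP => ?_⟩
    rcases h2 _ (isGrSub_corr hℳ hN hP hL) with h | h
    · left
      have := (corr_eq_bot_iff hNP).mp h
      exact le_antisymm (fun x hx => this ⟨hx, hLP hx⟩) hNL
    · right
      exact le_antisymm hLP ((corr_eq_top_iff hNL).mp h)
  · rintro ⟨h1, h2⟩
    refine ⟨subquot_top_ne_bot_iff.mpr h1, fun K hK => ?_⟩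
    set K' : AddSubgroup ↥P := K.comap (QuotientAddGroup.mk' (N.addSubgroupOf P))
      with hK'def
    set L : AddSubgroup M := K'.map P.subtype with hLdef
    have hL : ℳ.IsGrSub L :=
      isGrSub_map_subtype hℳ hP
        (isGrSub_comap_mk' (restrict_isGraded hℳ hP)
          (isGrSub_addSubgroupOf hℳ hP hN) hK)
    have hNL : N ≤ L := by
      intro p hp
      refine ⟨⟨p, hNP hp⟩, ?_, rfl⟩
      have h0 : ((⟨p, hNP hp⟩ : ↥P) : ↥P ⧸ N.addSubgroupOf P) = 0 := by
        rw [QuotientAddGroup.eq_zero_iff, AddSubgroup.mem_addSubgroupOf]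
        exact hp
      show ((⟨p, hNP hp⟩ : ↥P) : ↥P ⧸ N.addSubgroupOf P) ∈ K
      rw [h0]
      exact zero_mem K
    have hLP : L ≤ P := by
      rintro x ⟨a, _, rfl⟩
      exact a.2
    have hback : L.addSubgroupOf P = K' := by
      rw [hLdef]
      exact AddSubgroup.comap_map_eq_self_of_injective (AddSubgroup.subtype_injective P) K'
    have hKrec : K = K'.map (QuotientAddGroup.mk' (N.addSubgroupOf P)) :=
      (AddSubgroup.map_comap_eq_self_of_surjective
        (QuotientAddGroup.mk'_surjective _) K).symm
    rcases h2 L hL hNL hLP with h | h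
    · left
      rw [hKrec, ← hback, h]
      rw [AddSubgroup.map_eq_bot_iff, QuotientAddGroup.ker_mk']
    · right
      rw [hKrec, ← hback, h]
      exact (corr_eq_top_iff hNP).mpr le_rfl


theorem subquot_component {e f : Γ} (γ : e ⟶ f) :
    (ℳ.subquot N P).component γ =
      ((ℳ.component γ).addSubgroupOf P).map
        (QuotientAddGroup.mk' (N.addSubgroupOf P)) := rfl

theorem subquot_part_eq_bot_iff (hNP : N ≤ P) {e : Γ} :
    (ℳ.subquot N P).part e = ⊥ ↔
      ∀ (f : Γ) (γ : f ⟶ e), ℳ.component γ ⊓ P ≤ N := by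
  show (⨆ (f : Γ) (γ : f ⟶ e), (ℳ.subquot N P).component γ) = ⊥ ↔ _
  rw [iSup_eq_bot]
  refine forall_congr' fun f => ?_
  rw [iSup_eq_bot]
  refine forall_congr' fun γ => ?_
  rw [subquot_component, corr_eq_bot_iff hNP]

theorem mem_partSupport_subquot_iff (hNP : N ≤ P) {e : Γ} :
    e ∈ (ℳ.subquot N P).partSupport ↔
      ∃ (f : Γ) (γ : f ⟶ e), ¬ (ℳ.component γ ⊓ P ≤ N) := by
  show ¬ _ = ⊥ ↔ _
  rw [subquot_part_eq_bot_iff hNP]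
  push_neg
  rfl

theorem le_of_partSupport_subquot_eq_empty (hℳ : ℳ.IsGraded 𝒜)
    (hP : ℳ.IsGrSub P) (hNP : N ≤ P)
    (h : (ℳ.subquot N P).partSupport = ∅) : P ≤ N := by
  intro x hx
  have hx2 : x = ∑ γ ∈ decS hℳ x, comps hℳ x γ := (sum_comps hℳ x).symm
  rw [hx2]
  refine AddSubgroup.sum_mem _ fun γ _ => ?_
  have he : γ.2.1 ∉ (ℳ.subquot N P).partSupport := by
    rw [h]; exact Set.notMem_empty _
  rw [mem_partSupport_subquot_iff hNP] at he
  push_neg at he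
  exact he γ.1 γ.2.2 ⟨comps_mem hℳ x γ, hP.comps_mem' hℳ hx γ⟩

theorem partSupport_subquot_eq_empty_of_le (hNP : N ≤ P) (hPN : P ≤ N) :
    (ℳ.subquot N P).partSupport = ∅ := by
  ext e
  simp only [Set.mem_empty_iff_false, iff_false]
  intro he
  rw [mem_partSupport_subquot_iff hNP] at he
  obtain ⟨f, γ, h⟩ := he
  exact h (fun x hx => hPN hx.2)

theorem mem_partSupport_subquot_iff_part (hℳ : ℳ.IsGraded 𝒜)
    (hP : ℳ.IsGrSub P) (hNP : N ≤ P) {e : Γ} :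
    e ∈ (ℳ.subquot N P).partSupport ↔ ¬ (P ⊓ ℳ.part e ≤ N) := by
  rw [mem_partSupport_subquot_iff hNP]
  constructor
  · rintro ⟨f, γ, h⟩ hle
    exact h (fun x hx => hle ⟨hx.2, mem_part_of_mem_component hℳ hx.1⟩)
  · intro h
    obtain ⟨x, hxPe, hxN⟩ := SetLike.not_le_iff_exists.mp h
    obtain ⟨hxP, hxpart⟩ := hxPe
    have hex : ∃ γ ∈ decS hℳ x, comps hℳ x γ ∉ N := by
      by_contra hall
      push_neg at hall
      exact hxN (by
        rw [← sum_comps hℳ x]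
        exact AddSubgroup.sum_mem _ hall)
    obtain ⟨γ, _, hγN⟩ := hex
    obtain ⟨f, g, γm⟩ := γ
    have hg : g = e := by
      by_contra hg
      exact hγN (((mem_part_iff hℳ).mp hxpart ⟨f, g, γm⟩ hg) ▸ zero_mem N)
    subst hg
    refine ⟨f, γm, fun hle => hγN (hle ?_)⟩
    have h1 : comps hℳ x ⟨f, g, γm⟩ ∈ ℳ.component γm :=
      comps_mem hℳ x ⟨f, g, γm⟩
    exact ⟨h1, hP.comps_mem' hℳ hxP _⟩

theorem mem_partSupport_subquot_iff_lt (hℳ : ℳ.IsGraded 𝒜)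
    (hP : ℳ.IsGrSub P) (hNP : N ≤ P) {e : Γ} :
    e ∈ (ℳ.subquot N P).partSupport ↔ N ⊓ ℳ.part e < P ⊓ ℳ.part e := by
  rw [mem_partSupport_subquot_iff_part hℳ hP hNP, lt_iff_le_and_ne]
  constructor
  · intro h
    refine ⟨inf_le_inf_right _ hNP, fun heq => h ?_⟩
    intro x hx
    have : x ∈ N ⊓ ℳ.part e := heq ▸ hx
    exact this.1
  · rintro ⟨-, hne⟩ hle
    exact hne (le_antisymm (inf_le_inf_right _ hNP)
      (fun x hx => ⟨hle hx, hx.2⟩))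

end Subquot


/-! ### modular law -/

theorem sup_inf_assoc_of_le' {A B C : AddSubgroup M} (h : A ≤ C) :
    (A ⊔ B) ⊓ C = A ⊔ (B ⊓ C) := by
  apply le_antisymm
  · rintro x ⟨hx1, hx2⟩
    obtain ⟨a, ha, b, hb, rfl⟩ := AddSubgroup.mem_sup.mp hx1
    have hbC : b ∈ C := by
      have : b = a + b - a := by abel
      rw [this]
      exact sub_mem hx2 (h ha)
    exact AddSubgroup.mem_sup.mpr ⟨a, ha, b, ⟨hb, hbC⟩, rfl⟩
  · refine sup_le (le_inf le_sup_left h) (le_inf (le_trans inf_le_left le_sup_right) inf_le_right)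

/-! ### chain bound from composition series -/

theorem chain_bound (hℳ : ℳ.IsGraded 𝒜) {m : ℕ} {C : ℕ → AddSubgroup M}
    (hC : ℳ.IsGrCompSeries m C) {k : ℕ} {D : ℕ → AddSubgroup M}
    (hDgr : ∀ j, j ≤ k → ℳ.IsGrSub (D j))
    (hmono : ∀ j, j < k → D j ≤ D (j+1))
    (hne : ∀ j, j < k → D j ≠ D (j+1)) : k ≤ m := by
  classical
  obtain ⟨hC0, hCm, hCgr, hCmono, hCsimple⟩ := hC
  have hCstrict : ∀ i, i < m → ¬ C (i+1) ≤ C i := by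
    intro i hi
    have := ((isGrSimple_subquot_iff hℳ (hCgr i hi.le) (hCgr (i+1) hi)
      (hCmono i hi)).mp (hCsimple i hi)).1
    exact this
  have hDmono : ∀ j j', j ≤ j' → j' ≤ k → D j ≤ D j' := by
    intro j j' hjj' hj'k
    induction j' with
    | zero => rw [Nat.le_zero.mp hjj']
    | succ j'' ih =>
      rcases Nat.lt_or_ge j (j''+1) with h | h
      · exact le_trans (ih (Nat.lt_succ_iff.mp h) (le_trans (Nat.le_succ _) hj'k))
          (hmono j'' (Nat.lt_of_succ_le hj'k))
      · rw [Nat.le_antisymm hjj' h]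
  -- the local "X" family
  set X : ℕ → ℕ → AddSubgroup M := fun j i => (D j ⊓ C (i+1)) ⊔ C i with hXdef
  have hXgr : ∀ j i, j ≤ k → i < m → ℳ.IsGrSub (X j i) := fun j i hj hi =>
    isGrSub_sup hℳ (isGrSub_inf hℳ (hDgr j hj) (hCgr (i+1) hi)) (hCgr i hi.le)
  have hXvals : ∀ j i, j ≤ k → i < m → X j i = C i ∨ X j i = C (i+1) := by
    intro j i hj hi
    have hdich := ((isGrSimple_subquot_iff hℳ (hCgr i hi.le) (hCgr (i+1) hi)
      (hCmono i hi)).mp (hCsimple i hi)).2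
    have h1 : C i ≤ X j i := le_sup_right
    have h2 : X j i ≤ C (i+1) := sup_le inf_le_right (hCmono i hi)
    exact hdich (X j i) (hXgr j i hj hi) h1 h2
  have hXmono : ∀ j j' i, j ≤ j' → j' ≤ k → X j i ≤ X j' i := by
    intro j j' i h1 h2
    exact sup_le_sup_right (inf_le_inf_right _ (hDmono j j' h1 h2)) _
  -- each strict step has a "useful" composition index
  have hstep : ∀ j, j < k → ∃ i, i < m ∧
      (D j ⊓ C (i+1)) ⊔ (D (j+1) ⊓ C i) ≠ D (j+1) ⊓ C (i+1) := by
    intro j hj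
    by_contra hcon
    push_neg at hcon
    have haux : ∀ i, i ≤ m → D (j+1) ⊓ C i ≤ D j := by
      intro i
      induction i with
      | zero =>
        intro _
        rw [hC0]
        intro x hx
        rw [AddSubgroup.mem_bot.mp hx.2]
        exact zero_mem _
      | succ i' ih =>
        intro hi'
        rw [← hcon i' (Nat.lt_of_succ_le hi')]
        exact sup_le inf_le_left (ih (le_trans (Nat.le_succ _) hi'))
    have : D (j+1) ≤ D j := by
      have := haux m le_rfl
      rwa [hCm, inf_top_eq] at this
    exact hne j hj (le_antisymm (hmono j hj) this)
  -- usefulness implies X changes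
  have hXchange : ∀ j i, j < k → i < m →
      (D j ⊓ C (i+1)) ⊔ (D (j+1) ⊓ C i) ≠ D (j+1) ⊓ C (i+1) →
      X j i ≠ X (j+1) i := by
    intro j i hj hi huse heq
    apply huse
    have hA : D j ⊓ C (i+1) ≤ D (j+1) ⊓ C (i+1) :=
      inf_le_inf_right _ (hmono j hj)
    have step1 : (D (j+1) ⊓ C (i+1)) ⊓ X (j+1) i = D (j+1) ⊓ C (i+1) :=
      inf_eq_left.mpr le_sup_left
    calc (D j ⊓ C (i+1)) ⊔ (D (j+1) ⊓ C i)
        = (D j ⊓ C (i+1)) ⊔ (C i ⊓ (D (j+1) ⊓ C (i+1))) := by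
          congr 1
          rw [inf_left_comm, inf_eq_left.mpr (hCmono i hi)]
      _ = (D j ⊓ C (i+1) ⊔ C i) ⊓ (D (j+1) ⊓ C (i+1)) :=
          (sup_inf_assoc_of_le' hA).symm
      _ = X j i ⊓ (D (j+1) ⊓ C (i+1)) := rfl
      _ = X (j+1) i ⊓ (D (j+1) ⊓ C (i+1)) := by rw [heq]
      _ = (D (j+1) ⊓ C (i+1)) ⊓ X (j+1) i := inf_comm _ _
      _ = D (j+1) ⊓ C (i+1) := step1
  -- build the injection
  choose! F hF1 hF2 using hstep
  have hinj : ∀ j1 j2, j1 < k → j2 < k → j1 < j2 → F j1 ≠ F j2 := by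
    intro j1 j2 h1 h2 h12 heq
    set i := F j1 with hidef
    have hi : i < m := hF1 j1 h1
    have hchange1 : X j1 i ≠ X (j1+1) i := hXchange j1 i h1 hi (hF2 j1 h1)
    have hchange2 : X j2 i ≠ X (j2+1) i := by
      have := hXchange j2 (F j2) h2 (hF1 j2 h2) (hF2 j2 h2)
      rwa [← heq] at this
    have hv1 := hXvals j1 i h1.le hi
    have hv1' := hXvals (j1+1) i h1 hi
    have hv2 := hXvals j2 i h2.le hi
    have hv2' := hXvals (j2+1) i h2 hi
    -- X j1 = C i, X (j1+1) = C (i+1)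
    have hCine : C i ≠ C (i+1) := fun h =>
      hCstrict i hi (h ▸ le_rfl)
    have hX1 : X j1 i = C i := by
      rcases hv1 with h | h
      · exact h
      · exfalso
        rcases hv1' with h' | h'
        · exact hCstrict i hi (h ▸ h' ▸ hXmono j1 (j1+1) i (Nat.le_succ _) h1)
        · exact hchange1 (h.trans h'.symm)
    have hX1' : X (j1+1) i = C (i+1) := by
      rcases hv1' with h' | h'
      · exact (hchange1 (hX1.trans h'.symm)).elim
      · exact h'
    have hle : C (i+1) ≤ X j2 i := by
      rw [← hX1']
      exact hXmono (j1+1) j2 i h12 h2.le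
    have hX2 : X j2 i = C (i+1) := by
      rcases hv2 with h | h
      · exact absurd (h ▸ hle) (hCstrict i hi)
      · exact h
    have hX2' : X (j2+1) i = C (i+1) := by
      rcases hv2' with h | h
      · refine absurd ?_ (hCstrict i hi)
        rw [← h]
        exact le_trans hle (hXmono j2 (j2+1) i (Nat.le_succ _) h2)
      · exact h
    exact hchange2 (hX2.trans hX2'.symm)
  -- conclude
  have : Function.Injective (fun j : Fin k => (⟨F j.1, hF1 j.1 j.2⟩ : Fin m)) := by
    intro a b hab
    simp only [Fin.mk.injEq] at hab
    rcases lt_trichotomy a.1 b.1 with h | h | h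
    · exact absurd hab (hinj a.1 b.1 a.2 b.2 h)
    · exact Fin.ext h
    · exact absurd hab.symm (hinj b.1 a.1 b.2 a.2 h)
  simpa using Fintype.card_le_of_injective _ this


/-! ### existence of composition series -/

theorem exists_compSeries_of_bounded (hℳ : ℳ.IsGraded 𝒜) {L : ℕ}
    (hbound : ∀ (D : ℕ → AddSubgroup M) (n : ℕ), (∀ j, j ≤ n → ℳ.IsGrSub (D j)) →
      (∀ j, j < n → D j ≤ D (j+1)) → (∀ j, j < n → D j ≠ D (j+1)) → n ≤ L) :
    ∃ m ≤ L, ∃ c : ℕ → AddSubgroup M, ℳ.IsGrCompSeries m c := by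
  classical
  by_cases htop : (⊤ : AddSubgroup M) = ⊥
  · refine ⟨0, Nat.zero_le _, fun _ => ⊥, rfl, htop.symm, ?_, ?_, ?_⟩
    · intro i _; exact isGrSub_bot hℳ
    · intro i hi; omega
    · intro i hi; omega
  · set Q : ℕ → Prop := fun n => ∃ c : ℕ → AddSubgroup M, c 0 = ⊥ ∧ c n = ⊤ ∧
      (∀ i, i ≤ n → ℳ.IsGrSub (c i)) ∧ (∀ i, i < n → c i ≤ c (i+1)) ∧
      (∀ i, i < n → c i ≠ c (i+1)) with hQdef
    have hQbound : ∀ n, Q n → n ≤ L := by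
      rintro n ⟨c, _, _, hgr, hmono, hne⟩
      exact hbound c n hgr hmono hne
    have hQ1 : Q 1 := by
      refine ⟨fun i => if i = 0 then ⊥ else ⊤, by simp, by simp, ?_, ?_, ?_⟩
      · intro i _
        dsimp only
        split
        · exact isGrSub_bot hℳ
        · exact isGrSub_top hℳ
      · intro i hi
        interval_cases i
        dsimp only
        simp
      · intro i hi
        interval_cases i
        dsimp only
        simpa using fun h => htop h.symm
    set n₀ := Nat.findGreatest Q L with hn₀
    have hQn : Q n₀ := Nat.findGreatest_spec (hQbound 1 hQ1) hQ1
    obtain ⟨c, hc0, hcn, hcgr, hcmono, hcne⟩ := hQn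
    refine ⟨n₀, Nat.findGreatest_le L, c, hc0, hcn, hcgr, hcmono, ?_⟩
    intro i hi
    rw [isGrSimple_subquot_iff hℳ (hcgr i hi.le) (hcgr (i+1) hi) (hcmono i hi)]
    constructor
    · intro hle
      exact hcne i hi (le_antisymm (hcmono i hi) hle)
    · intro W hW hNW hWP
      by_contra hcon
      push_neg at hcon
      obtain ⟨hWne1, hWne2⟩ := hcon
      -- insert W to get a longer chain
      have hQsucc : Q (n₀ + 1) := by
        refine ⟨fun j => if j ≤ i then c j else if j = i + 1 then W else c (j - 1),
          ?_, ?_, ?_, ?_, ?_⟩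
        · simpa using hc0
        · have h1 : ¬ (n₀ + 1 ≤ i) := by omega
          have h2 : ¬ (n₀ + 1 = i + 1) := by omega
          simp only [if_neg h1, if_neg h2]
          simpa using hcn
        · intro j hj
          dsimp only
          split
          · exact hcgr j (by omega)
          · split
            · exact hW
            · exact hcgr (j - 1) (by omega)
        · intro j hj
          dsimp only
          rcases Nat.lt_or_ge j i with h | h
          · rw [if_pos h.le, if_pos (by omega : j + 1 ≤ i)]
            exact hcmono j (by omega)
          · rcases Nat.eq_or_lt_of_le h with h' | h'
            · rw [if_pos (by omega : j ≤ i), if_neg (by omega : ¬ j + 1 ≤ i),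
                if_pos (by omega : j + 1 = i + 1), ← h']
              exact hNW
            · rcases Nat.eq_or_lt_of_le h' with h'' | h''
              · rw [if_neg (by omega : ¬ j ≤ i), if_pos (by omega : j = i + 1),
                  if_neg (by omega : ¬ j + 1 ≤ i), if_neg (by omega : ¬ j + 1 = i + 1)]
                have : j + 1 - 1 = i + 1 := by omega
                rw [this]
                exact hWP
              · rw [if_neg (by omega : ¬ j ≤ i), if_neg (by omega : ¬ j = i + 1),
                  if_neg (by omega : ¬ j + 1 ≤ i), if_neg (by omega : ¬ j + 1 = i + 1)]
                have h3 : j + 1 - 1 = (j - 1) + 1 := by omega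
                rw [h3]
                exact hcmono (j - 1) (by omega)
        · intro j hj
          dsimp only
          rcases Nat.lt_or_ge j i with h | h
          · rw [if_pos h.le, if_pos (by omega : j + 1 ≤ i)]
            exact hcne j (by omega)
          · rcases Nat.eq_or_lt_of_le h with h' | h'
            · rw [if_pos (by omega : j ≤ i), if_neg (by omega : ¬ j + 1 ≤ i),
                if_pos (by omega : j + 1 = i + 1), ← h']
              exact hWne1.symm
            · rcases Nat.eq_or_lt_of_le h' with h'' | h''
              · rw [if_neg (by omega : ¬ j ≤ i), if_pos (by omega : j = i + 1),
                  if_neg (by omega : ¬ j + 1 ≤ i), if_neg (by omega : ¬ j + 1 = i + 1)]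
                have : j + 1 - 1 = i + 1 := by omega
                rw [this]
                exact hWne2
              · rw [if_neg (by omega : ¬ j ≤ i), if_neg (by omega : ¬ j = i + 1),
                  if_neg (by omega : ¬ j + 1 ≤ i), if_neg (by omega : ¬ j + 1 = i + 1)]
                have h3 : j + 1 - 1 = (j - 1) + 1 := by omega
                rw [h3]
                exact hcne (j - 1) (by omega)
      have := hQbound (n₀ + 1) hQsucc
      have h4 := Nat.findGreatest_is_greatest (show Nat.findGreatest Q L < n₀ + 1 by omega) this
      exact h4 hQsucc


/-! ### transfer between `M`-chains and `part e`-chains -/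

theorem map_subtype_lt {P : AddSubgroup M} {A B : AddSubgroup ↥P} (h : A < B) :
    A.map P.subtype < B.map P.subtype := by
  refine lt_of_le_of_ne (AddSubgroup.map_mono h.le) ?_
  intro heq
  exact h.ne (AddSubgroup.map_injective (AddSubgroup.subtype_injective P) heq)

theorem addSubgroupOf_lt {A B P : AddSubgroup M} (hA : A ≤ P) (hB : B ≤ P)
    (h : A < B) : A.addSubgroupOf P < B.addSubgroupOf P := by
  refine lt_of_le_of_ne ?_ ?_
  · rw [addSubgroupOf_le_addSubgroupOf_iff]
    exact inf_le_inf_right _ h.le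
  · intro heq
    have := congrArg (AddSubgroup.map P.subtype) heq
    rw [AddSubgroup.addSubgroupOf_map_subtype, AddSubgroup.addSubgroupOf_map_subtype,
      inf_eq_left.mpr hA, inf_eq_left.mpr hB] at this
    exact h.ne this

theorem map_subtype_le_part {e : Γ} {A : AddSubgroup ↥(ℳ.part e)} :
    A.map (ℳ.part e).subtype ≤ ℳ.part e := by
  rintro x ⟨a, _, rfl⟩
  exact a.2

/-- Supports of subquotients of chains inside `part e` are contained in `{e}`. -/
theorem partSupport_subquot_subset_singleton (hℳ : ℳ.IsGraded 𝒜) {e : Γ}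
    {N P' : AddSubgroup M} (hNP : N ≤ P') (hPe : P' ≤ ℳ.part e) :
    (ℳ.subquot N P').partSupport ⊆ {e} := by
  intro f hf
  rw [mem_partSupport_subquot_iff hNP] at hf
  obtain ⟨g, γ, h⟩ := hf
  by_contra hfe
  refine h ?_
  intro x hx
  have : x ∈ ℳ.component γ ⊓ ℳ.part e := ⟨hx.1, hPe hx.2⟩
  rw [component_inf_part_eq_bot hℳ γ hfe] at this
  rw [AddSubgroup.mem_bot.mp this]
  exact zero_mem _

theorem mem_partSupport_self (hℳ : ℳ.IsGraded 𝒜) {e : Γ}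
    {N P' : AddSubgroup M} (hP' : ℳ.IsGrSub P') (hNP : N ≤ P') (hne : N ≠ P')
    (hPe : P' ≤ ℳ.part e) : e ∈ (ℳ.subquot N P').partSupport := by
  rw [mem_partSupport_subquot_iff_part hℳ hP' hNP]
  rw [inf_eq_left.mpr hPe]
  intro hle
  exact hne (le_antisymm hNP hle)

/-! ### forward easy directions -/

theorem g0Artinian_of_strongly (h𝒜 : 𝒜.IsObjectUnital) (hℳ : ℳ.IsGraded 𝒜)
    (h : ℳ.StronglyG0Artinian) : ℳ.G0Artinian := by
  intro e
  rintro ⟨c, hgr, hlt⟩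
  have hP : ℳ.IsGrSub (ℳ.part e) := part_isGrSub h𝒜 hℳ e
  set c' : ℕ → AddSubgroup M := fun n => (c n).map (ℳ.part e).subtype with hc'
  have hgr' : ∀ n, ℳ.IsGrSub (c' n) := fun n => isGrSub_map_subtype hℳ hP (hgr n)
  have hlt' : ∀ n, c' (n+1) < c' n := fun n => map_subtype_lt (hlt n)
  obtain ⟨n, hn⟩ := h c' ⟨hgr', fun i => (hlt' i).le, fun i => by
    refine subset_trans
      (partSupport_subquot_subset_singleton hℳ (hlt' (i+1)).le map_subtype_le_part) ?_
    intro f hf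
    rw [Set.mem_singleton_iff] at hf
    subst hf
    exact mem_partSupport_self hℳ (hgr' i) (hlt' i).le (hlt' i).ne map_subtype_le_part⟩
  exact (hlt' n).ne (hn (n+1) (Nat.le_succ n))

theorem g0Noetherian_of_strongly (h𝒜 : 𝒜.IsObjectUnital) (hℳ : ℳ.IsGraded 𝒜)
    (h : ℳ.StronglyG0Noetherian) : ℳ.G0Noetherian := by
  intro e
  rintro ⟨c, hgr, hlt⟩
  have hP : ℳ.IsGrSub (ℳ.part e) := part_isGrSub h𝒜 hℳ e
  set c' : ℕ → AddSubgroup M := fun n => (c n).map (ℳ.part e).subtype with hc'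
  have hgr' : ∀ n, ℳ.IsGrSub (c' n) := fun n => isGrSub_map_subtype hℳ hP (hgr n)
  have hlt' : ∀ n, c' n < c' (n+1) := fun n => map_subtype_lt (hlt n)
  obtain ⟨n, hn⟩ := h c' ⟨hgr', fun i => (hlt' i).le, fun i => by
    refine subset_trans
      (partSupport_subquot_subset_singleton hℳ (hlt' (i+1)).le map_subtype_le_part) ?_
    intro f hf
    rw [Set.mem_singleton_iff] at hf
    subst hf
    exact mem_partSupport_self hℳ (hgr' (i+1)) (hlt' i).le (hlt' i).ne map_subtype_le_part⟩
  exact (hlt' n).ne (hn (n+1) (Nat.le_succ n)).symm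


/-! ### backward directions -/

theorem strongly_art_of_bounded (h𝒜 : 𝒜.IsObjectUnital) (hℳ : ℳ.IsGraded 𝒜)
    (hart : ℳ.G0Artinian) {Δ : Set Γ} {n₀ : ℕ} (hfin : (Δᶜ : Set Γ).Finite)
    (hΔ : ∀ e ∈ Δ, ∃ m ≤ n₀, ∃ cc : ℕ → AddSubgroup ↥(ℳ.part e),
      (ℳ.restrict (ℳ.part e)).IsGrCompSeries m cc) :
    ℳ.StronglyG0Artinian := by
  intro c hc
  obtain ⟨hcgr, hcdesc, hctight⟩ := hc
  by_cases hstab : ∃ i, c (i+1) = c i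
  · obtain ⟨i, hi⟩ := hstab
    refine ⟨i, ?_⟩
    have key : ∀ j, i ≤ j → c (j+1) = c j := by
      intro j hj
      induction j, hj using Nat.le_induction with
      | base => exact hi
      | succ j hj ih =>
        have hempty : (ℳ.subquot (c (j+1)) (c j)).partSupport = ∅ :=
          partSupport_subquot_eq_empty_of_le (hcdesc j) (ih ▸ le_rfl)
        have hsub := hctight j
        rw [hempty, Set.subset_empty_iff] at hsub
        exact le_antisymm (hcdesc (j+1))
          (le_of_partSupport_subquot_eq_empty hℳ (hcgr (j+1)) (hcdesc (j+1)) hsub)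
    intro m hm
    induction m, hm using Nat.le_induction with
    | base => rfl
    | succ m hm ih => rw [key m hm, ih]
  · push_neg at hstab
    exfalso
    -- supports are nonempty and decreasing
    have hSmono : ∀ i j, i ≤ j → (ℳ.subquot (c (j+1)) (c j)).partSupport ⊆
        (ℳ.subquot (c (i+1)) (c i)).partSupport := by
      intro i j hij
      induction j, hij using Nat.le_induction with
      | base => exact subset_rfl
      | succ j hj ih => exact subset_trans (hctight j) ih
    have hSne : ∀ i, ∃ e, e ∈ (ℳ.subquot (c (i+1)) (c i)).partSupport := by
      intro i
      by_contra hcon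
      push_neg at hcon
      have : (ℳ.subquot (c (i+1)) (c i)).partSupport = ∅ :=
        Set.eq_empty_iff_forall_notMem.mpr hcon
      exact hstab i (le_antisymm (hcdesc i)
        (le_of_partSupport_subquot_eq_empty hℳ (hcgr i) (hcdesc i) this))
    choose E hE using hSne
    -- membership in a support gives a strict drop in `part e`
    have hdrop : ∀ i e, e ∈ (ℳ.subquot (c (i+1)) (c i)).partSupport →
        c (i+1) ⊓ ℳ.part e < c i ⊓ ℳ.part e := by
      intro i e he
      exact (mem_partSupport_subquot_iff_lt hℳ (hcgr i) (hcdesc i)).mp he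
    -- bound for elements of Δ
    have hbound : ∀ i, E i ∈ Δ → i + 1 ≤ n₀ := by
      intro i hEi
      obtain ⟨m, hmn, cc, hcc⟩ := hΔ (E i) hEi
      set e := E i
      set P := ℳ.part e with hPdef
      have hPgr : ℳ.IsGrSub P := part_isGrSub h𝒜 hℳ e
      have hres := restrict_isGraded hℳ hPgr
      set D : ℕ → AddSubgroup ↥P := fun j => (c (i+1-j) ⊓ P).addSubgroupOf P with hDdef
      have hDgr : ∀ j, j ≤ i+1 → (ℳ.restrict P).IsGrSub (D j) := fun j _ =>
        isGrSub_addSubgroupOf hℳ hPgr (isGrSub_inf hℳ (hcgr _) hPgr)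
      have hDlt : ∀ j, j < i+1 → D j < D (j+1) := by
        intro j hj
        have h1 : i + 1 - j = (i - j) + 1 := by omega
        have h2 : i + 1 - (j+1) = i - j := by omega
        rw [hDdef]
        dsimp only
        rw [h1, h2]
        refine addSubgroupOf_lt inf_le_right inf_le_right ?_
        exact hdrop (i-j) e (hSmono (i-j) i (by omega) (hE i))
      have := chain_bound hres hcc (D := D) hDgr
        (fun j hj => (hDlt j hj).le) (fun j hj => (hDlt j hj).ne)
      omega
    -- pigeonhole on the finite complement
    have hinfib : ∀ n : ℕ, E (n + n₀) ∈ (Δᶜ : Set Γ) := by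
      intro n
      by_contra hcon
      have : E (n + n₀) ∈ Δ := Set.not_notMem.mp (by simpa using hcon)
      have := hbound (n + n₀) this
      omega
    haveI : Finite ↥(Δᶜ : Set Γ) := hfin.to_subtype
    obtain ⟨y, hy⟩ := Finite.exists_infinite_fiber
      (fun n : ℕ => (⟨E (n + n₀), hinfib n⟩ : ↥(Δᶜ : Set Γ)))
    set e := (y : Γ) with hedef
    -- e is in every support
    have hein : ∀ j, e ∈ (ℳ.subquot (c (j+1)) (c j)).partSupport := by
      intro j
      have hinf : (Set.preimage (fun n : ℕ =>
          (⟨E (n + n₀), hinfib n⟩ : ↥(Δᶜ : Set Γ))) {y}).Infinite :=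
        Set.infinite_coe_iff.mp hy
      obtain ⟨n, hn1, hn2⟩ := hinf.exists_gt j
      have hEn : E (n + n₀) = e := congrArg Subtype.val hn1
      refine hSmono j (n + n₀) (by omega) ?_
      rw [← hEn]
      exact hE (n + n₀)
    -- contradiction with G0Artinian at e
    refine hart e ⟨fun j => (c j ⊓ ℳ.part e).addSubgroupOf (ℳ.part e),
      fun j => isGrSub_addSubgroupOf hℳ (part_isGrSub h𝒜 hℳ e)
        (isGrSub_inf hℳ (hcgr j) (part_isGrSub h𝒜 hℳ e)), fun j => ?_⟩
    exact addSubgroupOf_lt inf_le_right inf_le_right (hdrop j e (hein j))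


theorem strongly_noeth_of_bounded (h𝒜 : 𝒜.IsObjectUnital) (hℳ : ℳ.IsGraded 𝒜)
    (hnoe : ℳ.G0Noetherian) {Δ : Set Γ} {n₀ : ℕ} (hfin : (Δᶜ : Set Γ).Finite)
    (hΔ : ∀ e ∈ Δ, ∃ m ≤ n₀, ∃ cc : ℕ → AddSubgroup ↥(ℳ.part e),
      (ℳ.restrict (ℳ.part e)).IsGrCompSeries m cc) :
    ℳ.StronglyG0Noetherian := by
  intro c hc
  obtain ⟨hcgr, hcasc, hctight⟩ := hc
  by_cases hstab : ∃ i, c (i+1) = c i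
  · obtain ⟨i, hi⟩ := hstab
    refine ⟨i, ?_⟩
    have key : ∀ j, i ≤ j → c (j+1) = c j := by
      intro j hj
      induction j, hj using Nat.le_induction with
      | base => exact hi
      | succ j hj ih =>
        have hempty : (ℳ.subquot (c j) (c (j+1))).partSupport = ∅ :=
          partSupport_subquot_eq_empty_of_le (hcasc j) (ih ▸ le_rfl)
        have hsub := hctight j
        rw [hempty, Set.subset_empty_iff] at hsub
        exact le_antisymm
          (le_of_partSupport_subquot_eq_empty hℳ (hcgr (j+2)) (hcasc (j+1)) hsub)
          (hcasc (j+1))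
    intro m hm
    induction m, hm using Nat.le_induction with
    | base => rfl
    | succ m hm ih => rw [key m hm, ih]
  · push_neg at hstab
    exfalso
    have hSmono : ∀ i j, i ≤ j → (ℳ.subquot (c j) (c (j+1))).partSupport ⊆
        (ℳ.subquot (c i) (c (i+1))).partSupport := by
      intro i j hij
      induction j, hij using Nat.le_induction with
      | base => exact subset_rfl
      | succ j hj ih => exact subset_trans (hctight j) ih
    have hSne : ∀ i, ∃ e, e ∈ (ℳ.subquot (c i) (c (i+1))).partSupport := by
      intro i
      by_contra hcon
      push_neg at hcon
      have : (ℳ.subquot (c i) (c (i+1))).partSupport = ∅ :=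
        Set.eq_empty_iff_forall_notMem.mpr hcon
      exact hstab i (le_antisymm
        (le_of_partSupport_subquot_eq_empty hℳ (hcgr (i+1)) (hcasc i) this)
        (hcasc i))
    choose E hE using hSne
    have hdrop : ∀ i e, e ∈ (ℳ.subquot (c i) (c (i+1))).partSupport →
        c i ⊓ ℳ.part e < c (i+1) ⊓ ℳ.part e := by
      intro i e he
      exact (mem_partSupport_subquot_iff_lt hℳ (hcgr (i+1)) (hcasc i)).mp he
    have hbound : ∀ i, E i ∈ Δ → i + 1 ≤ n₀ := by
      intro i hEi
      obtain ⟨m, hmn, cc, hcc⟩ := hΔ (E i) hEi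
      set e := E i
      set P := ℳ.part e with hPdef
      have hPgr : ℳ.IsGrSub P := part_isGrSub h𝒜 hℳ e
      have hres := restrict_isGraded hℳ hPgr
      set D : ℕ → AddSubgroup ↥P := fun j => (c j ⊓ P).addSubgroupOf P with hDdef
      have hDgr : ∀ j, j ≤ i+1 → (ℳ.restrict P).IsGrSub (D j) := fun j _ =>
        isGrSub_addSubgroupOf hℳ hPgr (isGrSub_inf hℳ (hcgr _) hPgr)
      have hDlt : ∀ j, j < i+1 → D j < D (j+1) := by
        intro j hj
        refine addSubgroupOf_lt inf_le_right inf_le_right ?_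
        exact hdrop j e (hSmono j i (by omega) (hE i))
      have := chain_bound hres hcc (D := D) hDgr
        (fun j hj => (hDlt j hj).le) (fun j hj => (hDlt j hj).ne)
      omega
    have hinfib : ∀ n : ℕ, E (n + n₀) ∈ (Δᶜ : Set Γ) := by
      intro n
      by_contra hcon
      have : E (n + n₀) ∈ Δ := Set.not_notMem.mp (by simpa using hcon)
      have := hbound (n + n₀) this
      omega
    haveI : Finite ↥(Δᶜ : Set Γ) := hfin.to_subtype
    obtain ⟨y, hy⟩ := Finite.exists_infinite_fiber
      (fun n : ℕ => (⟨E (n + n₀), hinfib n⟩ : ↥(Δᶜ : Set Γ)))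
    set e := (y : Γ) with hedef
    have hein : ∀ j, e ∈ (ℳ.subquot (c j) (c (j+1))).partSupport := by
      intro j
      have hinf : (Set.preimage (fun n : ℕ =>
          (⟨E (n + n₀), hinfib n⟩ : ↥(Δᶜ : Set Γ))) {y}).Infinite :=
        Set.infinite_coe_iff.mp hy
      obtain ⟨n, hn1, hn2⟩ := hinf.exists_gt j
      have hEn : E (n + n₀) = e := congrArg Subtype.val hn1
      refine hSmono j (n + n₀) (by omega) ?_
      rw [← hEn]
      exact hE (n + n₀)
    refine hnoe e ⟨fun j => (c j ⊓ ℳ.part e).addSubgroupOf (ℳ.part e),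
      fun j => isGrSub_addSubgroupOf hℳ (part_isGrSub h𝒜 hℳ e)
        (isGrSub_inf hℳ (hcgr j) (part_isGrSub h𝒜 hℳ e)), fun j => ?_⟩
    exact addSubgroupOf_lt inf_le_right inf_le_right (hdrop j e (hein j))


/-! ### supports of sups of families in distinct parts -/

theorem comps_iSup_parts (hℳ : ℳ.IsGraded 𝒜) {E : ℕ → Γ}
    (hEinj : ∀ j k, j ≠ k → E j ≠ E k) {T : ℕ → AddSubgroup M}
    (hTgr : ∀ k, ℳ.IsGrSub (T k)) (hTle : ∀ k, T k ≤ ℳ.part (E k)) :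
    ∀ x ∈ (⨆ k, T k), ∀ γ : GrIdx Γ,
      (∀ k₀, γ.2.1 = E k₀ → comps hℳ x γ ∈ T k₀) ∧
      ((∀ k, γ.2.1 ≠ E k) → comps hℳ x γ = 0) := by
  intro x hx
  rw [AddSubgroup.iSup_eq_closure] at hx
  induction hx using AddSubgroup.closure_induction with
  | mem y hy =>
    obtain ⟨_, ⟨k, rfl⟩, hyk⟩ := hy
    intro γ
    constructor
    · intro k₀ hγ
      by_cases hkk : k₀ = k
      · subst hkk
        exact (hTgr k₀).comps_mem' hℳ hyk γ
      · have : comps hℳ y γ = 0 := by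
          refine (mem_part_iff hℳ).mp (hTle k hyk) γ ?_
          rw [hγ]
          exact hEinj k₀ k hkk
        rw [this]
        exact zero_mem _
    · intro hall
      exact (mem_part_iff hℳ).mp (hTle k hyk) γ (hall k)
  | zero =>
    intro γ
    constructor
    · intro k₀ _
      rw [comps_zero hℳ]
      exact zero_mem _
    · intro _
      rw [comps_zero hℳ]
  | add y z _ _ hy hz =>
    intro γ
    constructor
    · intro k₀ hγ
      rw [comps_add hℳ]
      exact add_mem ((hy γ).1 k₀ hγ) ((hz γ).1 k₀ hγ)
    · intro hall
      rw [comps_add hℳ, (hy γ).2 hall, (hz γ).2 hall, add_zero]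
  | neg y _ hy =>
    intro γ
    constructor
    · intro k₀ hγ
      rw [comps_neg hℳ]
      exact neg_mem ((hy γ).1 k₀ hγ)
    · intro hall
      rw [comps_neg hℳ, (hy γ).2 hall, neg_zero]

theorem partSupport_subquot_iSup (hℳ : ℳ.IsGraded 𝒜) {E : ℕ → Γ}
    (hEinj : ∀ j k, j ≠ k → E j ≠ E k) {U V : ℕ → AddSubgroup M}
    (hUgr : ∀ k, ℳ.IsGrSub (U k)) (hVgr : ∀ k, ℳ.IsGrSub (V k))
    (hUle : ∀ k, U k ≤ ℳ.part (E k)) (hVle : ∀ k, V k ≤ ℳ.part (E k))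
    (hVU : ∀ k, V k ≤ U k) :
    (ℳ.subquot (⨆ k, V k) (⨆ k, U k)).partSupport =
      {e | ∃ k, e = E k ∧ V k ≠ U k} := by
  have hsup : (⨆ k, V k) ≤ ⨆ k, U k := iSup_mono hVU
  have hINDU := comps_iSup_parts hℳ hEinj hUgr hUle
  have hINDV := comps_iSup_parts hℳ hEinj hVgr hVle
  ext e
  rw [mem_partSupport_subquot_iff hsup]
  constructor
  · rintro ⟨f, γ, hγ⟩
    obtain ⟨x, hx, hxn⟩ := SetLike.not_le_iff_exists.mp hγ
    obtain ⟨hx1, hx2⟩ := hx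
    -- x is homogeneous of degree γ
    have hxself : comps hℳ x ⟨f, e, γ⟩ = x := comps_self hℳ hx1
    by_cases hek : ∃ k, e = E k
    · obtain ⟨k, hk⟩ := hek
      refine ⟨k, hk, ?_⟩
      intro hVUk
      apply hxn
      have : x ∈ U k := by
        rw [← hxself]
        exact (hINDU x hx2 ⟨f, e, γ⟩).1 k hk
      rw [← hVUk] at this
      exact le_iSup V k this
    · push_neg at hek
      exfalso
      apply hxn
      have : x = 0 := by
        rw [← hxself]
        exact (hINDU x hx2 ⟨f, e, γ⟩).2 hek
      rw [this]
      exact zero_mem _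
  · rintro ⟨k, rfl, hk⟩
    have hlt : V k < U k := lt_of_le_of_ne (hVU k) hk
    obtain ⟨x, hxU, hxV⟩ := SetLike.not_le_iff_exists.mp (fun h => hk (le_antisymm (hVU k) h))
    -- some homogeneous component of x is not in V k
    have hex : ∃ γ ∈ decS hℳ x, comps hℳ x γ ∉ V k := by
      by_contra hall
      push_neg at hall
      exact hxV (by
        rw [← sum_comps hℳ x]
        exact AddSubgroup.sum_mem _ hall)
    obtain ⟨γ, _, hγV⟩ := hex
    obtain ⟨f, g, γm⟩ := γ
    have hg : g = E k := by
      by_contra hg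
      exact hγV (((mem_part_iff hℳ).mp (hUle k hxU) ⟨f, g, γm⟩ hg) ▸ zero_mem _)
    subst hg
    refine ⟨f, γm, ?_⟩
    intro hle
    have hz1 : comps hℳ x ⟨f, E k, γm⟩ ∈ ℳ.component γm := comps_mem hℳ x ⟨f, E k, γm⟩
    have hz2 : comps hℳ x ⟨f, E k, γm⟩ ∈ ⨆ j, U j :=
      le_iSup U k ((hUgr k).comps_mem' hℳ hxU ⟨f, E k, γm⟩)
    have hz3 : comps hℳ x ⟨f, E k, γm⟩ ∈ ⨆ j, V j := hle ⟨hz1, hz2⟩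
    have hz4 : comps hℳ x ⟨f, E k, γm⟩ ∈ V k := by
      have hself : comps hℳ (comps hℳ x ⟨f, E k, γm⟩) ⟨f, E k, γm⟩
          = comps hℳ x ⟨f, E k, γm⟩ := comps_self hℳ hz1
      rw [← hself]
      exact (hINDV _ hz3 ⟨f, E k, γm⟩).1 k rfl
    exact hγV hz4


/-! ### the hard forward direction: boundedness -/

theorem bounded_of_strongly (h𝒜 : 𝒜.IsObjectUnital) (hℳ : ℳ.IsGraded 𝒜)
    (h : ℳ.StronglyG0Artinian ∨ ℳ.StronglyG0Noetherian) :
    ∃ (Δ : Set Γ) (n₀ : ℕ), (Δᶜ : Set Γ).Finite ∧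
      ∀ e ∈ Δ, ∃ m ≤ n₀, ∃ cc : ℕ → AddSubgroup ↥(ℳ.part e),
        (ℳ.restrict (ℳ.part e)).IsGrCompSeries m cc := by
  classical
  by_contra hcon
  push_neg at hcon
  have hpick : ∀ l : List Γ, ∃ e : Γ, e ∉ l ∧
      ∀ m ≤ l.length, ∀ cc : ℕ → AddSubgroup ↥(ℳ.part e),
        ¬ (ℳ.restrict (ℳ.part e)).IsGrCompSeries m cc := by
    intro l
    have hfin : (({x : Γ | x ∉ l})ᶜ : Set Γ).Finite := by
      refine Set.Finite.subset l.finite_toSet ?_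
      intro x hx
      simpa using hx
    obtain ⟨e, he1, he2⟩ := hcon {x : Γ | x ∉ l} l.length hfin
    exact ⟨e, he1, he2⟩
  choose pick hp1 hp2 using hpick
  set aux : ℕ → List Γ := fun n => Nat.rec [] (fun _ l => l ++ [pick l]) n with hauxdef
  have haux_succ : ∀ n, aux (n+1) = aux n ++ [pick (aux n)] := fun n => rfl
  set E : ℕ → Γ := fun k => pick (aux k) with hEdef
  have haux_len : ∀ n, (aux n).length = n := by
    intro n
    induction n with
    | zero => rfl
    | succ n ih => rw [haux_succ, List.length_append, ih]; rfl
  have haux_mem : ∀ j k, j < k → E j ∈ aux k := by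
    intro j k hjk
    induction k with
    | zero => omega
    | succ k ih =>
      rw [haux_succ, List.mem_append]
      rcases Nat.lt_or_ge j k with hlt | hge
      · exact Or.inl (ih hlt)
      · have : j = k := by omega
        subst this
        right
        simp [hEdef]
  have hEinj : ∀ j k, j ≠ k → E j ≠ E k := by
    have key : ∀ j k, j < k → E j ≠ E k := by
      intro j k hjk heq
      exact hp1 (aux k) (show E k ∈ aux k from heq ▸ haux_mem j k hjk)
    intro j k hjk
    rcases Nat.lt_or_ge j k with hlt | hge
    · exact key j k hlt
    · have hkj : k < j := by omega
      exact fun heq => key k j hkj heq.symm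
  have hlong : ∀ k, ∃ Dk : ℕ → AddSubgroup ↥(ℳ.part (E k)),
      (∀ j, j ≤ k → (ℳ.restrict (ℳ.part (E k))).IsGrSub (Dk j)) ∧
      (∀ j, j < k → Dk j ≤ Dk (j+1)) ∧ (∀ j, j < k → Dk j ≠ Dk (j+1)) := by
    intro k
    have hres := restrict_isGraded hℳ (part_isGrSub h𝒜 hℳ (E k))
    have hnotb : ¬ (∀ (Dk : ℕ → AddSubgroup ↥(ℳ.part (E k))) (n : ℕ),
        (∀ j, j ≤ n → (ℳ.restrict (ℳ.part (E k))).IsGrSub (Dk j)) →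
        (∀ j, j < n → Dk j ≤ Dk (j+1)) → (∀ j, j < n → Dk j ≠ Dk (j+1)) →
        n ≤ k) := by
      intro hb
      obtain ⟨m, hm, cc, hcc⟩ := exists_compSeries_of_bounded hres hb
      refine hp2 (aux k) m ?_ cc hcc
      rw [haux_len]
      exact hm
    push_neg at hnotb
    obtain ⟨Dk, n, hg, hmono, hne, hkn⟩ := hnotb
    exact ⟨Dk, fun j hj => hg j (by omega), fun j hj => hmono j (by omega),
      fun j hj => hne j (by omega)⟩
  choose D hDgr hDmono hDne using hlong
  set T : ℕ → ℕ → AddSubgroup M :=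
    fun k j => (D k j).map (ℳ.part (E k)).subtype with hTdef
  have hTgr : ∀ k j, j ≤ k → ℳ.IsGrSub (T k j) := fun k j hj =>
    isGrSub_map_subtype hℳ (part_isGrSub h𝒜 hℳ (E k)) (hDgr k j hj)
  have hTle : ∀ k j, T k j ≤ ℳ.part (E k) := fun k j => map_subtype_le_part
  have hTmono : ∀ k j1 j2, j1 ≤ j2 → j2 ≤ k → T k j1 ≤ T k j2 := by
    intro k j1 j2 h12 h2k
    induction j2 with
    | zero => rw [Nat.le_zero.mp h12]
    | succ j ih =>
      rcases Nat.lt_or_ge j1 (j+1) with hl | hg2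
      · exact le_trans (ih (by omega) (by omega))
          (AddSubgroup.map_mono (hDmono k j (by omega)))
      · rw [Nat.le_antisymm h12 hg2]
  have hTne : ∀ k j, j < k → T k j ≠ T k (j+1) := fun k j hj heq =>
    hDne k j hj (AddSubgroup.map_injective
      (AddSubgroup.subtype_injective _) heq)
  rcases h with hstr | hstr
  · -- strongly artinian: build a tight descending chain
    set W : ℕ → ℕ → AddSubgroup M := fun i k => T k (k - min i k) with hWdef
    have hWgr : ∀ i k, ℳ.IsGrSub (W i k) := fun i k => hTgr k _ (by omega)
    have hWle : ∀ i k, W i k ≤ ℳ.part (E k) := fun i k => hTle k _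
    have hWmono : ∀ i k, W (i+1) k ≤ W i k := fun i k =>
      hTmono k _ _ (by omega) (by omega)
    have hWeq : ∀ i k, k ≤ i → W (i+1) k = W i k := by
      intro i k hk
      have h1 : k - min (i+1) k = 0 := by omega
      have h2 : k - min i k = 0 := by omega
      rw [hWdef]
      dsimp only
      rw [h1, h2]
    have hWne : ∀ i k, i < k → W (i+1) k ≠ W i k := by
      intro i k hik
      have h1 : k - min (i+1) k = k - i - 1 := by omega
      have h2 : k - min i k = (k - i - 1) + 1 := by omega
      rw [hWdef]
      dsimp only
      rw [h1, h2]
      exact hTne k (k-i-1) (by omega)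
    set cs : ℕ → AddSubgroup M := fun i => ⨆ k, W i k with hcsdef
    have hcsgr : ∀ i, ℳ.IsGrSub (cs i) := fun i =>
      isGrSub_iSup hℳ (fun k => hWgr i k)
    have hcsdesc : ∀ i, cs (i+1) ≤ cs i := fun i =>
      iSup_mono (fun k => hWmono i k)
    have hS : ∀ i, (ℳ.subquot (cs (i+1)) (cs i)).partSupport =
        {e | ∃ k, e = E k ∧ W (i+1) k ≠ W i k} := fun i =>
      partSupport_subquot_iSup hℳ hEinj (fun k => hWgr i k)
        (fun k => hWgr (i+1) k) (fun k => hWle i k) (fun k => hWle (i+1) k)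
        (fun k => hWmono i k)
    have htight : ℳ.TightDesc cs := by
      refine ⟨hcsgr, hcsdesc, ?_⟩
      intro i
      rw [hS i, hS (i+1)]
      rintro e ⟨k, rfl, hk⟩
      refine ⟨k, rfl, ?_⟩
      have hik : i + 1 < k := by
        by_contra hik
        exact hk (hWeq (i+1) k (by omega))
      exact hWne i k (by omega)
    obtain ⟨n, hn⟩ := hstr cs htight
    have heq : cs (n+1) = cs n := hn (n+1) (Nat.le_succ n)
    have hSempty : (ℳ.subquot (cs (n+1)) (cs n)).partSupport = ∅ :=
      partSupport_subquot_eq_empty_of_le (hcsdesc n) (le_of_eq heq.symm)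
    have hmem : E (n+1) ∈ (ℳ.subquot (cs (n+1)) (cs n)).partSupport := by
      rw [hS n]
      exact ⟨n+1, rfl, hWne n (n+1) (by omega)⟩
    rw [hSempty] at hmem
    exact hmem
  · -- strongly noetherian: build a tight ascending chain
    set W : ℕ → ℕ → AddSubgroup M := fun i k => T k (min i k) with hWdef
    have hWgr : ∀ i k, ℳ.IsGrSub (W i k) := fun i k => hTgr k _ (by omega)
    have hWle : ∀ i k, W i k ≤ ℳ.part (E k) := fun i k => hTle k _
    have hWmono : ∀ i k, W i k ≤ W (i+1) k := fun i k =>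
      hTmono k _ _ (by omega) (by omega)
    have hWeq : ∀ i k, k ≤ i → W i k = W (i+1) k := by
      intro i k hk
      have h1 : min i k = k := by omega
      have h2 : min (i+1) k = k := by omega
      rw [hWdef]
      dsimp only
      rw [h1, h2]
    have hWne : ∀ i k, i < k → W i k ≠ W (i+1) k := by
      intro i k hik
      have h1 : min i k = i := by omega
      have h2 : min (i+1) k = i + 1 := by omega
      rw [hWdef]
      dsimp only
      rw [h1, h2]
      exact hTne k i (by omega)
    set cs : ℕ → AddSubgroup M := fun i => ⨆ k, W i k with hcsdef
    have hcsgr : ∀ i, ℳ.IsGrSub (cs i) := fun i =>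
      isGrSub_iSup hℳ (fun k => hWgr i k)
    have hcsasc : ∀ i, cs i ≤ cs (i+1) := fun i =>
      iSup_mono (fun k => hWmono i k)
    have hS : ∀ i, (ℳ.subquot (cs i) (cs (i+1))).partSupport =
        {e | ∃ k, e = E k ∧ W i k ≠ W (i+1) k} := fun i =>
      partSupport_subquot_iSup hℳ hEinj (fun k => hWgr (i+1) k)
        (fun k => hWgr i k) (fun k => hWle (i+1) k) (fun k => hWle i k)
        (fun k => hWmono i k)
    have htight : ℳ.TightAsc cs := by
      refine ⟨hcsgr, hcsasc, ?_⟩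
      intro i
      rw [hS i, hS (i+1)]
      rintro e ⟨k, rfl, hk⟩
      refine ⟨k, rfl, ?_⟩
      have hik : i + 1 < k := by
        by_contra hik
        exact hk (hWeq (i+1) k (by omega))
      exact hWne i k (by omega)
    obtain ⟨n, hn⟩ := hstr cs htight
    have heq : cs (n+1) = cs n := hn (n+1) (Nat.le_succ n)
    have hSempty : (ℳ.subquot (cs n) (cs (n+1))).partSupport = ∅ :=
      partSupport_subquot_eq_empty_of_le (hcsasc n) (le_of_eq heq)
    have hmem : E (n+1) ∈ (ℳ.subquot (cs n) (cs (n+1))).partSupport := by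
      rw [hS n]
      exact ⟨n+1, rfl, hWne n (n+1) (by omega)⟩
    rw [hSempty] at hmem
    exact hmem

end GModData

end Infrastructure

/-- Let `R` be a `Γ`-graded ring and `M` a `Γ`-graded right
`R`-module. Then `M` is strongly `Γ₀`-artinian (resp. strongly `Γ₀`-noetherian)
iff `M` is `Γ₀`-artinian (resp. `Γ₀`-noetherian) and there exist `Δ₀ ⊆ Γ₀` and
`n₀ ∈ ℕ` with `Γ₀ \ Δ₀` finite and, for every `e ∈ Δ₀`, `M(e)` of finite
gr-length at most `n₀`. -/
theorem stronglyG0_iff_G0_and_bounded_length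
    {Γ : Type u} [Groupoid.{u} Γ] {R : Type u} [AddCommGroup R] {M : Type u}
    [AddCommGroup M] (𝒜 : GRingData Γ R) (h𝒜 : 𝒜.IsObjectUnital)
    (ℳ : GModData Γ R M) (hℳ : ℳ.IsGraded 𝒜) :
    (ℳ.StronglyG0Artinian ↔ ℳ.G0Artinian ∧
      ∃ (Δ : Set Γ) (n₀ : ℕ), (Δᶜ : Set Γ).Finite ∧
        ∀ e ∈ Δ, ∃ m ≤ n₀, ∃ cc : ℕ → AddSubgroup ↥(ℳ.part e),
          (ℳ.restrict (ℳ.part e)).IsGrCompSeries m cc) ∧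
    (ℳ.StronglyG0Noetherian ↔ ℳ.G0Noetherian ∧
      ∃ (Δ : Set Γ) (n₀ : ℕ), (Δᶜ : Set Γ).Finite ∧
        ∀ e ∈ Δ, ∃ m ≤ n₀, ∃ cc : ℕ → AddSubgroup ↥(ℳ.part e),
          (ℳ.restrict (ℳ.part e)).IsGrCompSeries m cc) := by
  constructor
  · constructor
    · intro h
      exact ⟨GModData.g0Artinian_of_strongly h𝒜 hℳ h,
        GModData.bounded_of_strongly h𝒜 hℳ (Or.inl h)⟩
    · rintro ⟨hart, Δ, n₀, hfin, hΔ⟩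
      exact GModData.strongly_art_of_bounded h𝒜 hℳ hart hfin hΔ
  · constructor
    · intro h
      exact ⟨GModData.g0Noetherian_of_strongly h𝒜 hℳ h,
        GModData.bounded_of_strongly h𝒜 hℳ (Or.inr h)⟩
    · rintro ⟨hnoe, Δ, n₀, hfin, hΔ⟩
      exact GModData.strongly_noeth_of_bounded h𝒜 hℳ hnoe hfin hΔ
end

section
/- Let R be a Γ-graded ring and E a Γ-graded right R-module. Then E is gr-injective if and only if for every graded right ideal U of R, every morphism γ of Γ, and every homomorphism h : U → E of degree γ, there exists a homomorphism h' : R → E of degree γ extending h. -/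
open CategoryTheory

universe u

variable {Γ : Type u} [Groupoid.{u} Γ]

namespace GrBaer
open GModData
open scoped Classical
set_option linter.unusedSectionVars false

variable {Γ : Type u} [Groupoid.{u} Γ] {R : Type u} [AddCommGroup R]
variable {M : Type u} [AddCommGroup M] {E : Type u} [AddCommGroup E]
variable {𝒜 : GRingData Γ R}

/-- The component of a graded module at a bundled index. -/
abbrev compAt (ℳ : GModData Γ R M) (δ : GrIdx Γ) : AddSubgroup M :=
  ℳ.component δ.2.2

theorem isHomog_iff (ℳ : GModData Γ R M) (m : M) :
    ℳ.IsHomogeneous m ↔ ∃ δ : GrIdx Γ, m ∈ compAt ℳ δ :=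
  ⟨fun ⟨e, f, g, h⟩ => ⟨⟨e, f, g⟩, h⟩, fun ⟨⟨e, f, g⟩, h⟩ => ⟨e, f, g, h⟩⟩

theorem decomp_unique {ℳ : GModData Γ R M} (hℳ : ℳ.IsGraded 𝒜)
    {s t : Finset (GrIdx Γ)} {cf df : GrIdx Γ → M}
    (hs : ∀ γ ∈ s, cf γ ∈ compAt ℳ γ) (ht : ∀ γ ∈ t, df γ ∈ compAt ℳ γ)
    (h : ∑ γ ∈ s, cf γ = ∑ γ ∈ t, df γ) (γ : GrIdx Γ) :
    (if γ ∈ s then cf γ else 0) = (if γ ∈ t then df γ else 0) := by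
  classical
  set ef : GrIdx Γ → M :=
    fun γ => (if γ ∈ s then cf γ else 0) - (if γ ∈ t then df γ else 0) with hef
  have hsum : ∑ γ ∈ s ∪ t, ef γ = 0 := by
    rw [hef]
    rw [Finset.sum_sub_distrib, Finset.sum_ite_mem, Finset.sum_ite_mem,
      Finset.union_inter_cancel_left, Finset.union_inter_cancel_right, h, sub_self]
  have hmem : ∀ γ ∈ s ∪ t, ef γ ∈ compAt ℳ γ := by
    intro γ _
    apply sub_mem <;> split <;>
      first | exact hs _ ‹_› | exact ht _ ‹_› | exact zero_mem _
  have h0 := hℳ.independent (s ∪ t) ef hmem hsum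
  by_cases h1 : γ ∈ s ∪ t
  · have := h0 γ h1
    rw [hef] at this
    exact sub_eq_zero.mp this
  · rw [Finset.mem_union] at h1
    push_neg at h1
    rw [if_neg h1.1, if_neg h1.2]

/-- Elements of a graded submodule decompose into homogeneous elements of the
submodule. -/
theorem grSub_decomp_mem {ℳ : GModData Γ R M} {N : AddSubgroup M}
    (hN : ℳ.IsGrSub N) {x : M} (hx : x ∈ N) :
    ∃ (s : Finset (GrIdx Γ)) (cf : GrIdx Γ → M),
      (∀ γ ∈ s, cf γ ∈ compAt ℳ γ ∧ cf γ ∈ N) ∧ x = ∑ γ ∈ s, cf γ := by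
  classical
  have hx' := hN.2 x hx
  clear hx
  induction hx' using AddSubgroup.closure_induction with
  | mem m hm =>
    obtain ⟨hmN, hmh⟩ := hm
    rw [isHomog_iff] at hmh
    obtain ⟨δ, hδ⟩ := hmh
    exact ⟨{δ}, fun γ => if γ = δ then m else 0, by
      intro γ hγ
      rw [Finset.mem_singleton] at hγ
      subst hγ
      simp [hδ, hmN], by simp⟩
  | zero => exact ⟨∅, fun _ => 0, by simp, by simp⟩
  | add a b _ _ iha ihb =>
    obtain ⟨s₁, cf₁, h₁, e₁⟩ := iha
    obtain ⟨s₂, cf₂, h₂, e₂⟩ := ihb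
    refine ⟨s₁ ∪ s₂,
      fun γ => (if γ ∈ s₁ then cf₁ γ else 0) + (if γ ∈ s₂ then cf₂ γ else 0), ?_, ?_⟩
    · intro γ _
      constructor
      · apply add_mem <;> split <;>
          first | exact (h₁ _ ‹_›).1 | exact (h₂ _ ‹_›).1 | exact zero_mem _
      · apply add_mem <;> split <;>
          first | exact (h₁ _ ‹_›).2 | exact (h₂ _ ‹_›).2 | exact zero_mem _
    · rw [Finset.sum_add_distrib, Finset.sum_ite_mem, Finset.sum_ite_mem,
        Finset.union_inter_cancel_left, Finset.union_inter_cancel_right, e₁, e₂]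
  | neg a _ ih =>
    obtain ⟨s, cf, h₁, e₁⟩ := ih
    exact ⟨s, fun γ => -cf γ, fun γ hγ => ⟨neg_mem (h₁ γ hγ).1, neg_mem (h₁ γ hγ).2⟩,
      by rw [e₁, ← Finset.sum_neg_distrib]⟩

/-- In a graded module, homogeneous components of an element of a graded
submodule lie in the submodule. -/
theorem grSub_comp_mem {ℳ : GModData Γ R M} (hℳ : ℳ.IsGraded 𝒜)
    {N : AddSubgroup M} (hN : ℳ.IsGrSub N) {x : M} (hx : x ∈ N)
    {s : Finset (GrIdx Γ)} {cf : GrIdx Γ → M}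
    (hs : ∀ γ ∈ s, cf γ ∈ compAt ℳ γ) (hsum : x = ∑ γ ∈ s, cf γ) :
    ∀ γ ∈ s, cf γ ∈ N := by
  classical
  obtain ⟨t, df, h₁, e₁⟩ := grSub_decomp_mem hN hx
  intro γ hγ
  have := decomp_unique hℳ hs (fun γ hγ => (h₁ γ hγ).1) (by rw [← hsum, ← e₁]) γ
  rw [if_pos hγ] at this
  rw [this]
  split
  · exact (h₁ _ ‹_›).2
  · exact zero_mem _



theorem sum_filter_subset (p : GrIdx Γ → Prop) {s u : Finset (GrIdx Γ)}
    (hsu : s ⊆ u) (cf : GrIdx Γ → M) :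
    ∑ γ ∈ s.filter p, cf γ =
      ∑ γ ∈ u, if p γ then (if γ ∈ s then cf γ else 0) else 0 := by
  classical
  rw [← Finset.sum_filter, Finset.sum_ite_mem]
  apply Finset.sum_congr _ fun _ _ => rfl
  ext γ
  simp only [Finset.mem_filter, Finset.mem_inter]
  exact ⟨fun h => ⟨⟨hsu h.1, h.2⟩, h.1⟩, fun h => ⟨h.2, h.1.2⟩⟩

/-- Projection onto the components selected by the predicate `p`. -/
noncomputable def proj {ℳ : GModData Γ R M} (hℳ : ℳ.IsGraded 𝒜)
    (p : GrIdx Γ → Prop) (x : M) : M :=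
  ∑ γ ∈ (hℳ.decompose x).choose.filter p, (hℳ.decompose x).choose_spec.choose γ

theorem proj_spec {ℳ : GModData Γ R M} (hℳ : ℳ.IsGraded 𝒜) (p : GrIdx Γ → Prop)
    {x : M} {s : Finset (GrIdx Γ)} {cf : GrIdx Γ → M}
    (hs : ∀ γ ∈ s, cf γ ∈ compAt ℳ γ) (hsum : x = ∑ γ ∈ s, cf γ) :
    proj hℳ p x = ∑ γ ∈ s.filter p, cf γ := by
  classical
  obtain ⟨h1, h2⟩ := (hℳ.decompose x).choose_spec.choose_spec
  have key := decomp_unique hℳ h1 hs (by rw [← h2, ← hsum])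
  rw [proj, sum_filter_subset p (Finset.subset_union_left
      (s₂ := s)) _,
    sum_filter_subset p (Finset.subset_union_right
      (s₁ := (hℳ.decompose x).choose)) cf]
  exact Finset.sum_congr rfl fun γ _ => by rw [key γ]

theorem proj_add {ℳ : GModData Γ R M} (hℳ : ℳ.IsGraded 𝒜) (p : GrIdx Γ → Prop)
    (x y : M) : proj hℳ p (x + y) = proj hℳ p x + proj hℳ p y := by
  classical
  obtain ⟨s, cf, hs, hx⟩ := hℳ.decompose x
  obtain ⟨t, df, ht, hy⟩ := hℳ.decompose y
  have hmem : ∀ γ ∈ s ∪ t,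
      (if γ ∈ s then cf γ else 0) + (if γ ∈ t then df γ else 0) ∈ compAt ℳ γ := by
    intro γ _
    apply add_mem <;> split <;>
      first | exact hs _ ‹_› | exact ht _ ‹_› | exact zero_mem _
  have hsum : x + y = ∑ γ ∈ s ∪ t,
      ((if γ ∈ s then cf γ else 0) + (if γ ∈ t then df γ else 0)) := by
    rw [Finset.sum_add_distrib, Finset.sum_ite_mem, Finset.sum_ite_mem,
      Finset.union_inter_cancel_left, Finset.union_inter_cancel_right, hx, hy]
  rw [proj_spec hℳ p hmem hsum, proj_spec hℳ p hs hx, proj_spec hℳ p ht hy,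
    Finset.sum_add_distrib,
    sum_filter_subset p (Finset.subset_union_left (s₂ := t)) cf,
    sum_filter_subset p (Finset.subset_union_right (s₁ := s)) df]
  simp only [← Finset.sum_filter]

theorem proj_zero {ℳ : GModData Γ R M} (hℳ : ℳ.IsGraded 𝒜) (p : GrIdx Γ → Prop) :
    proj hℳ p 0 = 0 := by
  rw [proj_spec hℳ p (s := ∅) (cf := fun _ => 0) (by simp) (by simp)]
  simp

/-- The projection, as an additive homomorphism. -/
noncomputable def projHom {ℳ : GModData Γ R M} (hℳ : ℳ.IsGraded 𝒜)
    (p : GrIdx Γ → Prop) : M →+ M :=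
  AddMonoidHom.mk' (proj hℳ p) (proj_add hℳ p)

theorem proj_sum {ℳ : GModData Γ R M} (hℳ : ℳ.IsGraded 𝒜) (p : GrIdx Γ → Prop)
    {ι : Type*} (t : Finset ι) (g : ι → M) :
    proj hℳ p (∑ i ∈ t, g i) = ∑ i ∈ t, proj hℳ p (g i) :=
  map_sum (projHom hℳ p) g t

theorem proj_homog {ℳ : GModData Γ R M} (hℳ : ℳ.IsGraded 𝒜) (p : GrIdx Γ → Prop)
    {δ : GrIdx Γ} {m : M} (hm : m ∈ compAt ℳ δ) :
    proj hℳ p m = if p δ then m else 0 := by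
  classical
  rw [proj_spec hℳ p (s := {δ}) (cf := fun _ => m)
    (by intro γ hγ; rw [Finset.mem_singleton] at hγ; subst hγ; exact hm) (by simp),
    Finset.filter_singleton]
  split <;> simp

theorem proj_mem {ℳ : GModData Γ R M} (hℳ : ℳ.IsGraded 𝒜) (p : GrIdx Γ → Prop)
    {N : AddSubgroup M} (hN : ℳ.IsGrSub N) {x : M} (hx : x ∈ N) :
    proj hℳ p x ∈ N := by
  obtain ⟨h1, h2⟩ := (hℳ.decompose x).choose_spec.choose_spec
  exact sum_mem fun γ hγ =>
    grSub_comp_mem hℳ hN hx h1 h2 γ (Finset.mem_filter.mp hγ).1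

/-- Right multiplication, as an additive homomorphism. -/
def smulHomLeft {ℳ : GModData Γ R M} (hℳ : ℳ.IsGraded 𝒜) (a : R) : M →+ M :=
  AddMonoidHom.mk' (fun m => ℳ.smul m a) (fun m n => hℳ.add_smul m n a)

/-- Left multiplication, as an additive homomorphism. -/
def smulHomRight {ℳ : GModData Γ R M} (hℳ : ℳ.IsGraded 𝒜) (m : M) : R →+ M :=
  AddMonoidHom.mk' (ℳ.smul m) (hℳ.smul_add m)

theorem smul_zero' {ℳ : GModData Γ R M} (hℳ : ℳ.IsGraded 𝒜) (m : M) :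
    ℳ.smul m 0 = 0 := (smulHomRight hℳ m).map_zero

theorem zero_smul' {ℳ : GModData Γ R M} (hℳ : ℳ.IsGraded 𝒜) (a : R) :
    ℳ.smul 0 a = 0 := (smulHomLeft hℳ a).map_zero

theorem smul_neg' {ℳ : GModData Γ R M} (hℳ : ℳ.IsGraded 𝒜) (m : M) (a : R) :
    ℳ.smul m (-a) = -ℳ.smul m a := (smulHomRight hℳ m).map_neg a

theorem proj_smul_homog {ℳ : GModData Γ R M} (hR : 𝒜.toMod.IsGraded 𝒜)
    (hℳ : ℳ.IsGraded 𝒜) (q : Γ → Prop) {δ : GrIdx Γ} {x : M}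
    (hx : x ∈ compAt ℳ δ) (a : R) :
    proj hℳ (fun ι => q ι.2.1) (ℳ.smul x a) =
      if q δ.2.1 then ℳ.smul x a else 0 := by
  classical
  obtain ⟨d1, d2, dm⟩ := δ
  obtain ⟨t, df, ht, ha⟩ := hR.decompose a
  have hxa : ℳ.smul x a = ∑ τ ∈ t, ℳ.smul x (df τ) := by
    rw [ha]; exact map_sum (smulHomRight hℳ x) df t
  have hterm : ∀ τ ∈ t, proj hℳ (fun ι => q ι.2.1) (ℳ.smul x (df τ)) =
      if q d2 then ℳ.smul x (df τ) else 0 := by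
    rintro ⟨t1, t2, tm⟩ hτ
    by_cases hc : t2 = d1
    · subst hc
      exact proj_homog hℳ _ (δ := ⟨t1, d2, tm ≫ dm⟩)
        (hℳ.smul_mem dm tm hx (ht _ hτ))
    · rw [hℳ.smul_eq_zero dm tm hc hx (ht _ hτ), proj_zero hℳ]
      simp
  rw [hxa, proj_sum hℳ _ t, Finset.sum_congr rfl hterm]
  by_cases hq : q d2 <;> simp [hq, ← hxa]

theorem proj_smul {ℳ : GModData Γ R M} (hR : 𝒜.toMod.IsGraded 𝒜)
    (hℳ : ℳ.IsGraded 𝒜) (q : Γ → Prop) (m : M) (a : R) :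
    proj hℳ (fun ι => q ι.2.1) (ℳ.smul m a) =
      ℳ.smul (proj hℳ (fun ι => q ι.2.1) m) a := by
  classical
  obtain ⟨s, cf, hs, rfl⟩ := hℳ.decompose m
  have h1 : ℳ.smul (∑ γ ∈ s, cf γ) a = ∑ γ ∈ s, ℳ.smul (cf γ) a :=
    map_sum (smulHomLeft hℳ a) cf s
  rw [h1, proj_sum hℳ _ s,
    Finset.sum_congr rfl fun γ hγ => proj_smul_homog hR hℳ q (hs γ hγ) a,
    proj_spec hℳ _ hs rfl]
  have h2 : ℳ.smul (∑ γ ∈ Finset.filter (fun ι => q ι.2.1) s, cf γ) a =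
      ∑ γ ∈ Finset.filter (fun ι => q ι.2.1) s, ℳ.smul (cf γ) a :=
    map_sum (smulHomLeft hℳ a) cf _
  rw [h2, Finset.sum_filter]

theorem additive_ext {ℳ : GModData Γ R M} (hℳ : ℳ.IsGraded 𝒜) {F G : M → E}
    (hF : ∀ a b, F (a + b) = F a + F b) (hG : ∀ a b, G (a + b) = G a + G b)
    (h : ∀ δ : GrIdx Γ, ∀ m ∈ compAt ℳ δ, F m = G m) (m : M) : F m = G m := by
  obtain ⟨s, cf, hs, rfl⟩ := hℳ.decompose m
  have h1 : F (∑ γ ∈ s, cf γ) = ∑ γ ∈ s, F (cf γ) :=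
    map_sum (AddMonoidHom.mk' F hF) cf s
  have h2 : G (∑ γ ∈ s, cf γ) = ∑ γ ∈ s, G (cf γ) :=
    map_sum (AddMonoidHom.mk' G hG) cf s
  rw [h1, h2]
  exact Finset.sum_congr rfl fun γ hγ => h γ _ (hs γ hγ)



/-- Shift of a grading index along a groupoid morphism. -/
noncomputable def shiftIdx {e f : Γ} (γ : e ⟶ f) (δ : GrIdx Γ) : GrIdx Γ :=
  if h : δ.2.1 = f then ⟨δ.1, e, (δ.2.2 ≫ eqToHom h) ≫ Groupoid.inv γ⟩
  else if h' : δ.2.1 = e then ⟨δ.1, f, (δ.2.2 ≫ eqToHom h') ≫ γ⟩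
  else δ

theorem shiftIdx_fst {e f : Γ} (γ : e ⟶ f) (δ : GrIdx Γ) :
    (shiftIdx γ δ).1 = δ.1 := by
  unfold shiftIdx
  split
  · rfl
  · split <;> rfl

theorem shiftIdx_inv {e f : Γ} (γ : e ⟶ f) (δ : GrIdx Γ) :
    shiftIdx (Groupoid.inv γ) (shiftIdx γ δ) = δ := by
  obtain ⟨a, b, τ⟩ := δ
  by_cases hf : b = f
  · subst hf
    have h1 : shiftIdx γ ⟨a, b, τ⟩ = ⟨a, e, τ ≫ Groupoid.inv γ⟩ := by
      simp [shiftIdx]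
    have h2 : shiftIdx (Groupoid.inv γ) (⟨a, e, τ ≫ Groupoid.inv γ⟩ : GrIdx Γ) =
        ⟨a, b, (τ ≫ Groupoid.inv γ) ≫ Groupoid.inv (Groupoid.inv γ)⟩ := by
      simp [shiftIdx]
    rw [h1, h2]
    simp
  · by_cases he : b = e
    · subst he
      have hfb : ¬ f = b := fun h => hf h.symm
      have h1 : shiftIdx γ ⟨a, b, τ⟩ = ⟨a, f, τ ≫ γ⟩ := by
        simp [shiftIdx, hf]
      have h2 : shiftIdx (Groupoid.inv γ) (⟨a, f, τ ≫ γ⟩ : GrIdx Γ) =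
          ⟨a, b, (τ ≫ γ) ≫ Groupoid.inv γ⟩ := by
        simp [shiftIdx, hfb]
      rw [h1, h2]
      simp
    · have h1 : shiftIdx γ ⟨a, b, τ⟩ = ⟨a, b, τ⟩ := by
        simp [shiftIdx, hf, he]
      rw [h1]
      simp [shiftIdx, hf, he]

theorem shiftIdx_inv' {e f : Γ} (γ : e ⟶ f) (δ : GrIdx Γ) :
    shiftIdx γ (shiftIdx (Groupoid.inv γ) δ) = δ := by
  have h := shiftIdx_inv (Groupoid.inv γ) δ
  rwa [show Groupoid.inv (Groupoid.inv γ) = γ by simp] at h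

/-- Shift of the grading of a module along a groupoid morphism. -/
noncomputable def shiftMod (ℳ : GModData Γ R M) {e f : Γ} (γ : e ⟶ f) :
    GModData Γ R M where
  smul := ℳ.smul
  component := fun {a b} τ => compAt ℳ (shiftIdx γ ⟨a, b, τ⟩)

theorem shiftMod_compAt (ℳ : GModData Γ R M) {e f : Γ} (γ : e ⟶ f)
    (δ : GrIdx Γ) : compAt (shiftMod ℳ γ) δ = compAt ℳ (shiftIdx γ δ) := rfl

theorem shiftIdx_cod_f {e f a : Γ} (γ : e ⟶ f) (σ : a ⟶ f) :
    shiftIdx γ ⟨a, f, σ⟩ = ⟨a, e, σ ≫ Groupoid.inv γ⟩ := by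
  simp [shiftIdx]

theorem shiftIdx_cod_e {e f a : Γ} (γ : e ⟶ f) (hef : e ≠ f) (σ : a ⟶ e) :
    shiftIdx γ ⟨a, e, σ⟩ = ⟨a, f, σ ≫ γ⟩ := by
  simp [shiftIdx, hef]

theorem shiftIdx_other {e f a b : Γ} (γ : e ⟶ f) (hb : b ≠ f) (hb' : b ≠ e)
    (σ : a ⟶ b) : shiftIdx γ ⟨a, b, σ⟩ = ⟨a, b, σ⟩ := by
  simp [shiftIdx, hb, hb']

theorem shiftMod_isGraded {ℳ : GModData Γ R M} (hℳ : ℳ.IsGraded 𝒜)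
    {e f : Γ} (γ : e ⟶ f) : (shiftMod ℳ γ).IsGraded 𝒜 := by
  classical
  have hinj : Function.Injective (shiftIdx γ : GrIdx Γ → GrIdx Γ) := by
    intro x y hxy
    rw [← shiftIdx_inv γ x, hxy, shiftIdx_inv]
  have hinj' : Function.Injective (shiftIdx (Groupoid.inv γ) : GrIdx Γ → GrIdx Γ) := by
    intro x y hxy
    have h := congrArg (shiftIdx γ) hxy
    rwa [shiftIdx_inv', shiftIdx_inv'] at h
  have hmemdom : ∀ (a b : Γ) (σ : a ⟶ b) (m : M),
      m ∈ compAt (shiftMod ℳ γ) ⟨a, b, σ⟩ →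
      ∃ (b' : Γ) (σ' : a ⟶ b'), m ∈ ℳ.component σ' := by
    intro a b σ m hm
    rw [shiftMod_compAt] at hm
    unfold shiftIdx at hm
    dsimp only at hm
    split_ifs at hm
    · exact ⟨_, _, hm⟩
    · exact ⟨_, _, hm⟩
    · exact ⟨_, _, hm⟩
  constructor
  · exact hℳ.add_smul
  · exact hℳ.smul_add
  · exact hℳ.smul_mul
  · -- decompose
    intro x
    obtain ⟨s, cf, hs, hx⟩ := hℳ.decompose x
    refine ⟨s.map ⟨shiftIdx (Groupoid.inv γ), hinj'⟩, fun δ => cf (shiftIdx γ δ),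
      ?_, ?_⟩
    · intro δ hδ
      simp only [Finset.mem_map, Function.Embedding.coeFn_mk] at hδ
      obtain ⟨δ₀, hδ₀, rfl⟩ := hδ
      show cf (shiftIdx γ (shiftIdx (Groupoid.inv γ) δ₀)) ∈
        compAt ℳ (shiftIdx γ (shiftIdx (Groupoid.inv γ) δ₀))
      rw [shiftIdx_inv']
      exact hs δ₀ hδ₀
    · rw [hx, Finset.sum_map]
      simp only [Function.Embedding.coeFn_mk]
      exact (Finset.sum_congr rfl fun δ₀ _ => by rw [shiftIdx_inv']).symm
  · -- independent
    intro s cf hs hsum δ hδ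
    have key := hℳ.independent (s.map ⟨shiftIdx γ, hinj⟩)
      (fun ι => cf (shiftIdx (Groupoid.inv γ) ι)) ?_ ?_
    · have h := key (shiftIdx γ δ) (Finset.mem_map_of_mem _ hδ)
      rwa [shiftIdx_inv] at h
    · intro ι hι
      simp only [Finset.mem_map, Function.Embedding.coeFn_mk] at hι
      obtain ⟨δ₀, hδ₀, rfl⟩ := hι
      show cf (shiftIdx (Groupoid.inv γ) (shiftIdx γ δ₀)) ∈
        compAt ℳ (shiftIdx γ δ₀)
      rw [shiftIdx_inv]
      exact hs δ₀ hδ₀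
    · rw [Finset.sum_map]
      simp only [Function.Embedding.coeFn_mk]
      rw [← hsum]
      exact Finset.sum_congr rfl fun δ₀ _ => by rw [shiftIdx_inv]
  · -- smul_mem
    intro e₁ f₁ g σ τ m a hm ha
    have hm' : m ∈ compAt ℳ (shiftIdx γ ⟨e₁, f₁, σ⟩) := hm
    show ℳ.smul m a ∈ compAt ℳ (shiftIdx γ ⟨g, f₁, τ ≫ σ⟩)
    by_cases hf : f₁ = f
    · subst hf
      rw [shiftIdx_cod_f] at hm' ⊢
      show ℳ.smul m a ∈ ℳ.component ((τ ≫ σ) ≫ Groupoid.inv γ)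
      rw [Category.assoc]
      exact hℳ.smul_mem _ τ hm' ha
    · by_cases he : f₁ = e
      · subst he
        rw [shiftIdx_cod_e γ hf] at hm' ⊢
        show ℳ.smul m a ∈ ℳ.component ((τ ≫ σ) ≫ γ)
        rw [Category.assoc]
        exact hℳ.smul_mem _ τ hm' ha
      · rw [shiftIdx_other γ hf he] at hm' ⊢
        exact hℳ.smul_mem _ τ hm' ha
  · -- smul_eq_zero
    intro e₁ f₁ g h σ τ m a hne hm ha
    obtain ⟨b, σ', hm'⟩ := hmemdom e₁ f₁ σ m hm
    exact hℳ.smul_eq_zero σ' τ hne hm' ha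
  · -- smul_one
    intro e₁ f₁ σ m hm
    obtain ⟨b, σ', hm'⟩ := hmemdom e₁ f₁ σ m hm
    exact hℳ.smul_one σ' hm'

theorem shiftMod_isHomogeneous (ℳ : GModData Γ R M) {e f : Γ} (γ : e ⟶ f)
    (m : M) : (shiftMod ℳ γ).IsHomogeneous m ↔ ℳ.IsHomogeneous m := by
  rw [isHomog_iff, isHomog_iff]
  constructor
  · rintro ⟨δ, hδ⟩
    exact ⟨shiftIdx γ δ, hδ⟩
  · rintro ⟨δ, hδ⟩
    refine ⟨shiftIdx (Groupoid.inv γ) δ, ?_⟩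
    rw [shiftMod_compAt, shiftIdx_inv']
    exact hδ

theorem shiftMod_isGrSub {ℳ : GModData Γ R M} {N : AddSubgroup M}
    (hN : ℳ.IsGrSub N) {e f : Γ} (γ : e ⟶ f) : (shiftMod ℳ γ).IsGrSub N := by
  refine ⟨hN.1, fun n hn => ?_⟩
  have : {x : M | x ∈ N ∧ (shiftMod ℳ γ).IsHomogeneous x} =
      {x : M | x ∈ N ∧ ℳ.IsHomogeneous x} := by
    ext x
    simp [shiftMod_isHomogeneous]
  rw [this]
  exact hN.2 n hn



theorem restrict_smul {ℳ : GModData Γ R M} {N : AddSubgroup M}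
    (hsm : ∀ m ∈ N, ∀ a : R, ℳ.smul m a ∈ N) (m : ↥N) (a : R) :
    (ℳ.restrict N).smul m a = ⟨ℳ.smul ↑m a, hsm ↑m m.2 a⟩ := by
  show dite _ _ _ = _
  rw [dif_pos (hsm ↑m m.2 a)]

theorem restrict_isGraded {ℳ : GModData Γ R M} (hℳ : ℳ.IsGraded 𝒜)
    {N : AddSubgroup M} (hN : ℳ.IsGrSub N) : (ℳ.restrict N).IsGraded 𝒜 := by
  classical
  have hs := hN.1
  refine ⟨?_, ?_, ?_, ?_, ?_, ?_, ?_, ?_⟩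
  · intro m n a
    apply Subtype.ext
    rw [restrict_smul hs, restrict_smul hs, restrict_smul hs]
    show ℳ.smul (↑m + ↑n) a = ℳ.smul ↑m a + ℳ.smul ↑n a
    exact hℳ.add_smul _ _ _
  · intro m a b
    apply Subtype.ext
    rw [restrict_smul hs, restrict_smul hs, restrict_smul hs]
    exact hℳ.smul_add _ _ _
  · intro m a b
    apply Subtype.ext
    rw [restrict_smul hs, restrict_smul hs, restrict_smul hs]
    exact hℳ.smul_mul _ _ _
  · -- decompose
    intro x
    obtain ⟨s, cf, h1, h2⟩ := grSub_decomp_mem hN x.2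
    refine ⟨s, fun δ => if h : cf δ ∈ N then ⟨cf δ, h⟩ else 0, ?_, ?_⟩
    · intro δ hδ
      simp only [dif_pos (h1 δ hδ).2]
      exact AddSubgroup.mem_addSubgroupOf.2 (h1 δ hδ).1
    · apply Subtype.ext
      rw [AddSubmonoidClass.coe_finset_sum]
      show (x : M) = _
      rw [h2]
      exact Finset.sum_congr rfl fun δ hδ => by
        simp only [dif_pos (h1 δ hδ).2]
  · -- independent
    intro s cf hsd hsum δ hδ
    have key := hℳ.independent s (fun δ => ↑(cf δ))
      (fun δ hδ => AddSubgroup.mem_addSubgroupOf.1 (hsd δ hδ))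
      (by rw [← AddSubmonoidClass.coe_finset_sum, hsum]; rfl)
    exact Subtype.ext (key δ hδ)
  · -- smul_mem
    intro e₁ f₁ g σ τ m a hm ha
    have hm2 : (m : M) ∈ ℳ.component σ := hm
    have hv : ((ℳ.restrict N).smul m a : M) = ℳ.smul ↑m a :=
      congrArg Subtype.val (restrict_smul hs m a)
    refine AddSubgroup.mem_addSubgroupOf.2 ?_
    rw [hv]
    exact hℳ.smul_mem σ τ hm2 ha
  · -- smul_eq_zero
    intro e₁ f₁ g hh σ τ m a hne hm ha
    apply Subtype.ext
    rw [restrict_smul hs]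
    exact hℳ.smul_eq_zero σ τ hne (AddSubgroup.mem_addSubgroupOf.1 hm) ha
  · -- smul_one
    intro e₁ f₁ σ m hm
    apply Subtype.ext
    rw [restrict_smul hs]
    exact hℳ.smul_one σ (AddSubgroup.mem_addSubgroupOf.1 hm)

theorem toMod_isGraded (h𝒜 : 𝒜.IsObjectUnital) : 𝒜.toMod.IsGraded 𝒜 := by
  refine ⟨h𝒜.right_distrib, h𝒜.left_distrib,
    fun m a b => (h𝒜.mul_assoc m a b).symm, h𝒜.decompose, h𝒜.independent,
    ?_, ?_, ?_⟩
  · intro e f g σ τ m a hm ha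
    exact h𝒜.mul_mem σ τ hm ha
  · intro e f g hq σ τ m a hne hm ha
    exact h𝒜.mul_eq_zero σ τ hne hm ha
  · intro e f σ m hm
    exact h𝒜.mul_one σ hm

/-- The forward direction of the graded Baer criterion. -/
theorem baer_of_grInjective {E : Type u} [AddCommGroup E] (h𝒜 : 𝒜.IsObjectUnital)
    {ℰ : GModData Γ R E} (hℰ : ℰ.IsGraded 𝒜) (hinj : GrInjective 𝒜 ℰ)
    (U : AddSubgroup R) (hU : 𝒜.toMod.IsGrSub U) {e f : Γ} (γ : e ⟶ f)
    (h : ↥U → E) (hh : GModData.IsHomOfDeg (𝒜.toMod.restrict U) ℰ γ h) :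
    ∃ h' : R → E, GModData.IsHomOfDeg 𝒜.toMod ℰ γ h' ∧ ∀ x : ↥U, h' ↑x = h x := by
  classical
  have hR : 𝒜.toMod.IsGraded 𝒜 := toMod_isGraded h𝒜
  set ℳ' := shiftMod 𝒜.toMod γ with hMdef
  set 𝒩 := shiftMod (𝒜.toMod.restrict U) γ with hNdef
  have hℳ' : ℳ'.IsGraded 𝒜 := shiftMod_isGraded hR γ
  have h𝒩 : 𝒩.IsGraded 𝒜 := shiftMod_isGraded (restrict_isGraded hR hU) γ
  have hval : GModData.IsGrHom 𝒩 ℳ' (Subtype.val : ↥U → R) := by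
    refine ⟨fun m n => rfl, ?_, ?_⟩
    · intro m a
      exact congrArg Subtype.val (restrict_smul hU.1 m a)
    · intro a b σ m hm
      exact AddSubgroup.mem_addSubgroupOf.1 hm
  have hgr : GModData.IsGrHom 𝒩 ℰ h := by
    refine ⟨hh.1, hh.2.1, ?_⟩
    intro a b σ m hm
    have hm' : m ∈ compAt (𝒜.toMod.restrict U) (shiftIdx γ ⟨a, b, σ⟩) := hm
    by_cases hf : b = f
    · subst hf
      rw [shiftIdx_cod_f] at hm'
      have h2 := hh.2.2.1 a (σ ≫ Groupoid.inv γ) m hm'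
      rwa [Category.assoc, Groupoid.inv_comp, Category.comp_id] at h2
    · by_cases he : b = e
      · subst he
        rw [shiftIdx_cod_e γ hf] at hm'
        rw [hh.2.2.2 a f (σ ≫ γ) (fun hq => hf hq.symm) m hm']
        exact zero_mem _
      · rw [shiftIdx_other γ hf he] at hm'
        rw [hh.2.2.2 a b σ he m hm']
        exact zero_mem _
  obtain ⟨h₀, hh₀, hext⟩ := hinj R (↥U) ℳ' 𝒩 hℳ' h𝒩 Subtype.val hval
    Subtype.val_injective h hgr
  have hproj_smul := proj_smul hR hR (fun b => b = e)
  refine ⟨fun x => h₀ (proj hR (fun ι => ι.2.1 = e) x), ⟨?_, ?_, ?_, ?_⟩, ?_⟩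
  · intro m n
    dsimp only
    rw [proj_add hR, hh₀.1]
  · intro m a
    dsimp only
    rw [hproj_smul m a]
    exact hh₀.2.1 _ a
  · intro a σ m hm
    dsimp only
    have h1 : proj hR (fun ι => ι.2.1 = e) m = m := by
      rw [proj_homog hR _ (δ := ⟨a, e, σ⟩) hm, if_pos rfl]
    rw [h1]
    have h2 : m ∈ compAt ℳ' ⟨a, f, σ ≫ γ⟩ := by
      show m ∈ compAt 𝒜.toMod (shiftIdx γ ⟨a, f, σ ≫ γ⟩)
      rw [shiftIdx_cod_f]
      have h3 : (σ ≫ γ) ≫ Groupoid.inv γ = σ := by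
        rw [Category.assoc, Groupoid.comp_inv, Category.comp_id]
      show m ∈ compAt 𝒜.toMod ⟨a, e, (σ ≫ γ) ≫ Groupoid.inv γ⟩
      rw [h3]
      exact hm
    exact hh₀.2.2 a f (σ ≫ γ) m h2
  · intro a b σ hb m hm
    dsimp only
    have h1 : proj hR (fun ι => ι.2.1 = e) m = 0 := by
      rw [proj_homog hR _ (δ := ⟨a, b, σ⟩) hm, if_neg hb]
    rw [h1]
    exact (AddMonoidHom.mk' h₀ hh₀.1).map_zero
  · intro x
    obtain ⟨s, cf, h1, h2⟩ := grSub_decomp_mem hU x.2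
    set cfU : GrIdx Γ → ↥U := fun δ => if hc : cf δ ∈ U then ⟨cf δ, hc⟩ else 0
      with hcfU
    have hcfU_val : ∀ δ ∈ s, ↑(cfU δ) = cf δ := fun δ hδ => by
      rw [hcfU]; simp only [dif_pos (h1 δ hδ).2]
    have hx_eq : x = ∑ δ ∈ s, cfU δ := by
      apply Subtype.ext
      rw [AddSubmonoidClass.coe_finset_sum]
      show (x : R) = _
      rw [h2]
      exact Finset.sum_congr rfl fun δ hδ => (hcfU_val δ hδ).symm
    have hT : proj hR (fun ι => ι.2.1 = e) ↑x =
        ∑ δ ∈ s.filter (fun ι => ι.2.1 = e), cf δ :=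
      proj_spec hR _ (fun δ hδ => (h1 δ hδ).1) h2
    have hTU : ∑ δ ∈ s.filter (fun ι => ι.2.1 = e), cf δ =
        ↑(∑ δ ∈ s.filter (fun ι => ι.2.1 = e), cfU δ) := by
      rw [AddSubmonoidClass.coe_finset_sum]
      exact Finset.sum_congr rfl fun δ hδ =>
        (hcfU_val δ (Finset.mem_filter.mp hδ).1).symm
    have hhsum : ∀ t : Finset (GrIdx Γ), h (∑ δ ∈ t, cfU δ) =
        ∑ δ ∈ t, h (cfU δ) := fun t => map_sum (AddMonoidHom.mk' h hh.1) cfU t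
    have hvanish : ∀ δ ∈ s, ¬ δ.2.1 = e → h (cfU δ) = 0 := by
      rintro ⟨d1, d2, dm⟩ hδ hne
      refine hh.2.2.2 d1 d2 dm hne (cfU ⟨d1, d2, dm⟩)
        (AddSubgroup.mem_addSubgroupOf.2 ?_)
      show ↑(cfU ⟨d1, d2, dm⟩) ∈ compAt 𝒜.toMod ⟨d1, d2, dm⟩
      rw [hcfU_val _ hδ]
      exact (h1 _ hδ).1
    show h₀ (proj hR (fun ι => ι.2.1 = e) ↑x) = h x
    rw [hT, hTU, hext, hhsum, hx_eq, hhsum, Finset.sum_filter]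
    exact Finset.sum_congr rfl fun δ hδ => by
      by_cases hd : δ.2.1 = e
      · rw [if_pos hd]
      · rw [if_neg hd, hvanish δ hδ hd]



variable {ℰ : GModData Γ R E} {ℳ : GModData Γ R M}

/-- A partial extension: a graded submodule `P` of `M` together with a
gr-homomorphism `P → E`. -/
structure Ext (ℳ : GModData Γ R M) (ℰ : GModData Γ R E) : Type u where
  P : AddSubgroup M
  grSub : ℳ.IsGrSub P
  φ : ↥P → E
  φ_add : ∀ a b : ↥P, φ (a + b) = φ a + φ b
  φ_smul : ∀ (a : ↥P) (r : R) (hm : ℳ.smul ↑a r ∈ P),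
    φ ⟨ℳ.smul ↑a r, hm⟩ = ℰ.smul (φ a) r
  φ_gr : ∀ (δ : GrIdx Γ) (a : ↥P), ↑a ∈ compAt ℳ δ → φ a ∈ compAt ℰ δ

namespace Ext

instance : Preorder (Ext ℳ ℰ) where
  le X Y := X.P ≤ Y.P ∧
    ∀ (x : M) (hx : x ∈ X.P) (hy : x ∈ Y.P), Y.φ ⟨x, hy⟩ = X.φ ⟨x, hx⟩
  le_refl X := ⟨le_refl _, fun x hx hy => rfl⟩
  le_trans X Y Z hXY hYZ := ⟨hXY.1.trans hYZ.1,
    fun x hx hz => (hYZ.2 x (hXY.1 hx) hz).trans (hXY.2 x hx _)⟩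

theorem le_def {X Y : Ext ℳ ℰ} : X ≤ Y ↔ X.P ≤ Y.P ∧
    ∀ (x : M) (hx : x ∈ X.P) (hy : x ∈ Y.P), Y.φ ⟨x, hy⟩ = X.φ ⟨x, hx⟩ :=
  Iff.rfl

/-- The map of a partial extension, as an additive homomorphism. -/
def φHom (X : Ext ℳ ℰ) : ↥X.P →+ E := AddMonoidHom.mk' X.φ X.φ_add

theorem chain_bound {c : Set (Ext ℳ ℰ)} (hc : IsChain (· ≤ ·) c)
    (hne : c.Nonempty) : ∃ ub : Ext ℳ ℰ, ∀ X ∈ c, X ≤ ub := by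
  classical
  haveI : Nonempty c := hne.to_subtype
  set K : c → AddSubgroup M := fun X => X.1.P with hK
  have hdir : Directed (· ≤ ·) K := by
    intro i j
    rcases hc.total i.2 j.2 with hij | hji
    · exact ⟨j, hij.1, le_refl _⟩
    · exact ⟨i, le_refl _, hji.1⟩
  set Ps : AddSubgroup M := ⨆ i : c, K i with hPs
  have hmem : ∀ x : M, x ∈ Ps ↔ ∃ i : c, x ∈ (i : Ext ℳ ℰ).P := fun x =>
    AddSubgroup.mem_iSup_of_directed hdir
  have hsome : ∀ x : ↥Ps, ∃ i : c, (x : M) ∈ (i : Ext ℳ ℰ).P := fun x =>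
    (hmem ↑x).1 x.2
  set φs : ↥Ps → E := fun x =>
    ((hsome x).choose : Ext ℳ ℰ).φ ⟨↑x, (hsome x).choose_spec⟩ with hφs
  have wd : ∀ (x : ↥Ps) (i : c) (hx : (x : M) ∈ (i : Ext ℳ ℰ).P),
      φs x = (i : Ext ℳ ℰ).φ ⟨↑x, hx⟩ := by
    intro x i hx
    rcases hc.total i.2 (hsome x).choose.2 with hij | hji
    · exact hij.2 ↑x hx (hsome x).choose_spec
    · exact (hji.2 ↑x (hsome x).choose_spec hx).symm
  refine ⟨⟨Ps, ⟨?_, ?_⟩, φs, ?_, ?_, ?_⟩, ?_⟩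
  · intro m hm a
    obtain ⟨i, hi⟩ := (hmem m).1 hm
    exact (le_iSup K i : K i ≤ Ps) ((i : Ext ℳ ℰ).grSub.1 m hi a)
  · intro n hn
    obtain ⟨i, hi⟩ := (hmem n).1 hn
    refine AddSubgroup.closure_mono ?_ ((i : Ext ℳ ℰ).grSub.2 n hi)
    rintro y ⟨hy1, hy2⟩
    exact ⟨(le_iSup K i : K i ≤ Ps) hy1, hy2⟩
  · intro a b
    obtain ⟨i, hia⟩ := hsome a
    obtain ⟨j, hjb⟩ := hsome b
    rcases hc.total i.2 j.2 with hij | hji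
    · have hja : (a : M) ∈ (j : Ext ℳ ℰ).P := hij.1 hia
      rw [wd (a + b) j (add_mem hja hjb), wd a j hja, wd b j hjb]
      exact (j : Ext ℳ ℰ).φ_add ⟨↑a, hja⟩ ⟨↑b, hjb⟩
    · have hib : (b : M) ∈ (i : Ext ℳ ℰ).P := hji.1 hjb
      rw [wd (a + b) i (add_mem hia hib), wd a i hia, wd b i hib]
      exact (i : Ext ℳ ℰ).φ_add ⟨↑a, hia⟩ ⟨↑b, hib⟩
  · intro a r hm
    obtain ⟨i, hia⟩ := hsome a
    have hsm : ℳ.smul ↑a r ∈ (i : Ext ℳ ℰ).P := (i : Ext ℳ ℰ).grSub.1 _ hia r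
    rw [wd ⟨ℳ.smul ↑a r, hm⟩ i hsm, wd a i hia]
    exact (i : Ext ℳ ℰ).φ_smul ⟨↑a, hia⟩ r hsm
  · intro δ a ha
    obtain ⟨i, hia⟩ := hsome a
    rw [wd a i hia]
    exact (i : Ext ℳ ℰ).φ_gr δ ⟨↑a, hia⟩ ha
  · intro X hX
    refine ⟨le_iSup K ⟨X, hX⟩, ?_⟩
    intro x hx hy
    exact wd ⟨x, hy⟩ ⟨X, hX⟩ hx

end Ext

/-- An injective gr-homomorphism reflects homogeneity. -/
theorem grHom_reflect {N : Type u} [AddCommGroup N] {𝒩 : GModData Γ R N}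
    (hℳ : ℳ.IsGraded 𝒜) (h𝒩 : 𝒩.IsGraded 𝒜) {g : N → M}
    (hg : GModData.IsGrHom 𝒩 ℳ g) (hginj : Function.Injective g)
    {y : N} {δ : GrIdx Γ} (hy : g y ∈ compAt ℳ δ) : y ∈ compAt 𝒩 δ := by
  classical
  obtain ⟨s, cf, hs, hsum⟩ := h𝒩.decompose y
  have hg0 : g 0 = 0 := (AddMonoidHom.mk' g hg.1).map_zero
  have hgsum : g y = ∑ τ ∈ s, g (cf τ) := by
    rw [hsum]; exact map_sum (AddMonoidHom.mk' g hg.1) cf s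
  have hkey := decomp_unique hℳ (s := s) (cf := fun τ => g (cf τ))
    (fun τ hτ => hg.2.2 τ.1 τ.2.1 τ.2.2 _ (hs τ hτ)) (t := {δ})
    (df := fun _ => g y) (by
      intro τ hτ
      rw [Finset.mem_singleton] at hτ
      subst hτ
      exact hy) (by rw [← hgsum, Finset.sum_singleton])
  have hz : ∀ τ ∈ s, τ ≠ δ → cf τ = 0 := by
    intro τ hτ hne
    have h1 := hkey τ
    rw [if_pos hτ, if_neg (by simpa using hne)] at h1
    exact hginj (by rw [h1, hg0])
  by_cases hδ : δ ∈ s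
  · have hyy : y = cf δ := by
      rw [hsum, Finset.sum_eq_single δ (fun τ hτ hne => hz τ hτ hne) (fun h => absurd hδ h)]
    rw [hyy]
    exact hs δ hδ
  · have hyy : y = 0 := by
      rw [hsum]
      exact Finset.sum_eq_zero fun τ hτ => hz τ hτ (fun hh => hδ (hh ▸ hτ))
    rw [hyy]
    exact zero_mem _



theorem Ext.max_step (h𝒜 : 𝒜.IsObjectUnital) (hℳ : ℳ.IsGraded 𝒜)
    (hℰ : ℰ.IsGraded 𝒜)
    (hbaer : ∀ U : AddSubgroup R, 𝒜.toMod.IsGrSub U →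
      ∀ (e f : Γ) (γ : e ⟶ f) (h : ↥U → E),
        GModData.IsHomOfDeg (𝒜.toMod.restrict U) ℰ γ h →
        ∃ h' : R → E, GModData.IsHomOfDeg 𝒜.toMod ℰ γ h' ∧
          ∀ x : ↥U, h' ↑x = h x)
    (X : Ext ℳ ℰ) (hmax : ∀ Y : Ext ℳ ℰ, X ≤ Y → Y ≤ X) : X.P = ⊤ := by
  classical
  have hR := toMod_isGraded (𝒜 := 𝒜) h𝒜
  by_contra hPne
  have hex : ∃ (δ : GrIdx Γ) (x : M), x ∈ compAt ℳ δ ∧ x ∉ X.P := by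
    by_contra hno
    push_neg at hno
    apply hPne
    rw [eq_top_iff]
    intro m _
    obtain ⟨s, cf, hs, rfl⟩ := hℳ.decompose m
    exact sum_mem fun τ hτ => hno τ (cf τ) (hs τ hτ)
  obtain ⟨⟨a0, b0, σ₀⟩, x, hx, hxP⟩ := hex
  set U : AddSubgroup R :=
    { carrier := {r : R | ℳ.smul x r ∈ X.P}
      add_mem' := fun {a b} ha hb => by
        show ℳ.smul x (a + b) ∈ X.P
        rw [hℳ.smul_add]
        exact add_mem ha hb
      zero_mem' := by
        show ℳ.smul x 0 ∈ X.P
        rw [smul_zero' hℳ]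
        exact zero_mem _
      neg_mem' := fun {a} ha => by
        show ℳ.smul x (-a) ∈ X.P
        rw [smul_neg' hℳ]
        exact neg_mem ha } with hUdef
  have hUmem : ∀ r : R, r ∈ U ↔ ℳ.smul x r ∈ X.P := fun r => Iff.rfl
  have hinj : Function.Injective (shiftIdx (Groupoid.inv σ₀) : GrIdx Γ → GrIdx Γ) := by
    intro u v huv
    have h := congrArg (shiftIdx σ₀) huv
    rwa [shiftIdx_inv', shiftIdx_inv'] at h
  have hpiece : ∀ (τ : GrIdx Γ) (rr : R), rr ∈ compAt 𝒜.toMod τ →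
      ℳ.smul x rr ∈ compAt ℳ (shiftIdx (Groupoid.inv σ₀) τ) := by
    rintro ⟨t1, t2, tm⟩ rr hrr
    by_cases hc : t2 = a0
    · subst hc
      rw [shiftIdx_cod_f (Groupoid.inv σ₀) tm]
      show ℳ.smul x rr ∈ ℳ.component (tm ≫ Groupoid.inv (Groupoid.inv σ₀))
      rw [show Groupoid.inv (Groupoid.inv σ₀) = σ₀ by simp]
      exact hℳ.smul_mem σ₀ tm hx hrr
    · have h0 : ℳ.smul x rr = 0 := hℳ.smul_eq_zero σ₀ tm hc hx hrr
      rw [h0]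
      exact zero_mem _
  have hU : 𝒜.toMod.IsGrSub U := by
    constructor
    · intro r hr a
      show ℳ.smul x (𝒜.mul r a) ∈ X.P
      rw [hℳ.smul_mul]
      exact X.grSub.1 _ hr a
    · intro r hr
      obtain ⟨s, cf, hs, hsum⟩ := hR.decompose r
      have hcfU : ∀ τ ∈ s, cf τ ∈ U := by
        have hgf : ∀ κ ∈ s.map ⟨shiftIdx (Groupoid.inv σ₀), hinj⟩,
            ℳ.smul x (cf (shiftIdx σ₀ κ)) ∈ compAt ℳ κ := by
          intro κ hκ
          simp only [Finset.mem_map, Function.Embedding.coeFn_mk] at hκ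
          obtain ⟨τ, hτ, rfl⟩ := hκ
          rw [shiftIdx_inv']
          exact hpiece τ (cf τ) (hs τ hτ)
        have e1 : ℳ.smul x r = ∑ τ ∈ s, ℳ.smul x (cf τ) := by
          rw [hsum]
          exact map_sum (smulHomRight hℳ x) cf s
        have hsum2 : ℳ.smul x r =
            ∑ κ ∈ s.map ⟨shiftIdx (Groupoid.inv σ₀), hinj⟩,
              ℳ.smul x (cf (shiftIdx σ₀ κ)) := by
          rw [Finset.sum_map]
          simp only [Function.Embedding.coeFn_mk]
          rw [e1]
          exact Finset.sum_congr rfl fun τ _ => by rw [shiftIdx_inv']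
        have hmem2 := grSub_comp_mem hℳ X.grSub ((hUmem r).1 hr) hgf hsum2
        intro τ hτ
        have h3 := hmem2 (shiftIdx (Groupoid.inv σ₀) τ) (Finset.mem_map_of_mem _ hτ)
        rw [hUmem]
        rwa [shiftIdx_inv'] at h3
      rw [hsum]
      exact sum_mem fun τ hτ => AddSubgroup.subset_closure
        ⟨hcfU τ hτ, τ.1, τ.2.1, τ.2.2, hs τ hτ⟩
  set k : ↥U → E := fun r => X.φ ⟨ℳ.smul x ↑r, r.2⟩ with hkdef
  have hkadd : ∀ a b : ↥U, k (a + b) = k a + k b := by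
    intro a b
    have h1 : (⟨ℳ.smul x ↑(a + b), (a + b).2⟩ : ↥X.P) =
        ⟨ℳ.smul x ↑a, a.2⟩ + ⟨ℳ.smul x ↑b, b.2⟩ := by
      apply Subtype.ext
      show ℳ.smul x (↑a + ↑b) = ℳ.smul x ↑a + ℳ.smul x ↑b
      exact hℳ.smul_add x ↑a ↑b
    show X.φ _ = X.φ _ + X.φ _
    rw [h1]
    exact X.φ_add _ _
  have hk : GModData.IsHomOfDeg (𝒜.toMod.restrict U) ℰ σ₀ k := by
    refine ⟨hkadd, ?_, ?_, ?_⟩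
    · intro r a
      have h1 : (𝒜.toMod.restrict U).smul r a = ⟨𝒜.mul ↑r a, hU.1 ↑r r.2 a⟩ :=
        restrict_smul hU.1 r a
      rw [h1]
      have hmem2 : ℳ.smul (ℳ.smul x ↑r) a ∈ X.P := X.grSub.1 _ r.2 a
      have h2 : k ⟨𝒜.mul ↑r a, hU.1 ↑r r.2 a⟩ =
          X.φ ⟨ℳ.smul (ℳ.smul x ↑r) a, hmem2⟩ :=
        congrArg X.φ (Subtype.ext (hℳ.smul_mul x ↑r a))
      rw [h2, X.φ_smul ⟨ℳ.smul x ↑r, r.2⟩ a hmem2]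
    · intro cdom τ r hr
      have hr' : (r : R) ∈ 𝒜.component τ := hr
      exact X.φ_gr ⟨cdom, b0, τ ≫ σ₀⟩ _ (hℳ.smul_mem σ₀ τ hx hr')
    · intro cdom d τ hne r hr
      have hr' : (r : R) ∈ 𝒜.component τ := hr
      have h0 : ℳ.smul x ↑r = 0 := hℳ.smul_eq_zero σ₀ τ hne hx hr'
      show X.φ ⟨ℳ.smul x ↑r, r.2⟩ = 0
      have h1 : (⟨ℳ.smul x ↑r, r.2⟩ : ↥X.P) = 0 := Subtype.ext h0
      rw [h1]
      exact X.φHom.map_zero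
  obtain ⟨ψ, hψ, hψU⟩ := hbaer U hU a0 b0 σ₀ k hk
  set ψH : R →+ E := AddMonoidHom.mk' ψ hψ.1 with hψHdef
  have hψ0 : ψ 0 = 0 := ψH.map_zero
  set xR : AddSubgroup M := (smulHomRight hℳ x).range with hxRdef
  set P' : AddSubgroup M := X.P ⊔ xR with hP'def
  have hxP' : x ∈ P' := by
    have h1 : xR ≤ P' := le_sup_right
    exact h1 ⟨𝒜.one a0, hℳ.smul_one σ₀ hx⟩
  have hmemP' : ∀ z : M, z ∈ P' ↔ ∃ p ∈ X.P, ∃ r : R, p + ℳ.smul x r = z := by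
    intro z
    rw [hP'def, AddSubgroup.mem_sup]
    constructor
    · rintro ⟨p, hp, w, hw, rfl⟩
      obtain ⟨r, rfl⟩ := hw
      exact ⟨p, hp, r, rfl⟩
    · rintro ⟨p, hp, r, hz⟩
      exact ⟨p, hp, ℳ.smul x r, ⟨r, rfl⟩, hz⟩
  have hrep : ∀ z : ↥P', ∃ pr : M × R, pr.1 ∈ X.P ∧
      (z : M) = pr.1 + ℳ.smul x pr.2 := by
    intro z
    obtain ⟨p, hp, r, hz⟩ := (hmemP' ↑z).1 z.2
    exact ⟨(p, r), hp, hz.symm⟩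
  set φ' : ↥P' → E := fun z =>
    X.φ ⟨(hrep z).choose.1, (hrep z).choose_spec.1⟩ + ψ (hrep z).choose.2
    with hφ'def
  have wd : ∀ (z : ↥P') (p : M) (hp : p ∈ X.P) (r : R),
      (z : M) = p + ℳ.smul x r → φ' z = X.φ ⟨p, hp⟩ + ψ r := by
    intro z p hp r hzeq
    obtain ⟨hq, hzq⟩ := (hrep z).choose_spec
    set q := (hrep z).choose.1 with hqdef
    set sR := (hrep z).choose.2 with hsRdef
    have hqp : ℳ.smul x (r - sR) = q - p := by
      have e0 : ℳ.smul x (r - sR) = ℳ.smul x r - ℳ.smul x sR :=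
        (smulHomRight hℳ x).map_sub r sR
      rw [e0]
      rw [sub_eq_sub_iff_add_eq_add]
      have h3 := hzq.symm.trans hzeq
      rw [h3]
      exact add_comm _ _
    have hUr : r - sR ∈ U := by
      rw [hUmem, hqp]
      exact sub_mem hq hp
    have h5 : ψ (r - sR) = k ⟨r - sR, hUr⟩ := hψU ⟨r - sR, hUr⟩
    have h6 : k ⟨r - sR, hUr⟩ = X.φ ⟨q - p, sub_mem hq hp⟩ :=
      congrArg X.φ (Subtype.ext hqp)
    have h7 : X.φ ⟨q - p, sub_mem hq hp⟩ = X.φ ⟨q, hq⟩ - X.φ ⟨p, hp⟩ :=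
      X.φHom.map_sub ⟨q, hq⟩ ⟨p, hp⟩
    have h8 : ψ r - ψ sR = X.φ ⟨q, hq⟩ - X.φ ⟨p, hp⟩ := by
      have h9 : ψ (r - sR) = ψ r - ψ sR := ψH.map_sub r sR
      rw [← h9]
      exact h5.trans (h6.trans h7)
    show X.φ ⟨q, hq⟩ + ψ sR = X.φ ⟨p, hp⟩ + ψ r
    have h10 := sub_eq_sub_iff_add_eq_add.mp h8
    rw [← h10]
    exact add_comm _ _
  have hP'sub : ℳ.IsGrSub P' := by
    constructor
    · intro m hm a
      obtain ⟨p, hp, r, hzr⟩ := (hmemP' m).1 hm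
      rw [← hzr, hℳ.add_smul]
      apply (hmemP' _).2
      refine ⟨ℳ.smul p a, X.grSub.1 p hp a, 𝒜.mul r a, ?_⟩
      rw [hℳ.smul_mul]
    · intro n hn
      obtain ⟨p, hp, r, hzr⟩ := (hmemP' n).1 hn
      rw [← hzr]
      apply add_mem
      · refine AddSubgroup.closure_mono ?_ (X.grSub.2 p hp)
        rintro y ⟨hy1, hy2⟩
        exact ⟨(le_sup_left : X.P ≤ P') hy1, hy2⟩
      · obtain ⟨sr, cfr, hcfr, hrsum⟩ := hR.decompose r
        have e1 : ℳ.smul x r = ∑ τ ∈ sr, ℳ.smul x (cfr τ) := by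
          rw [hrsum]
          exact map_sum (smulHomRight hℳ x) cfr sr
        rw [e1]
        refine sum_mem fun τ hτ => AddSubgroup.subset_closure
          ⟨(le_sup_right : xR ≤ P') ⟨cfr τ, rfl⟩, ?_⟩
        rw [isHomog_iff]
        exact ⟨shiftIdx (Groupoid.inv σ₀) τ, hpiece τ _ (hcfr τ hτ)⟩
  have hφ'add : ∀ a b : ↥P', φ' (a + b) = φ' a + φ' b := by
    intro a b
    obtain ⟨p, hp, r, hzr⟩ := (hmemP' ↑a).1 a.2
    obtain ⟨q, hq, s', hzs⟩ := (hmemP' ↑b).1 b.2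
    have hab : ((a + b : ↥P') : M) = (p + q) + ℳ.smul x (r + s') := by
      show (a : M) + ↑b = _
      rw [← hzr, ← hzs, hℳ.smul_add]
      abel
    rw [wd (a + b) (p + q) (add_mem hp hq) (r + s') hab,
      wd a p hp r hzr.symm, wd b q hq s' hzs.symm]
    have h1 : X.φ ⟨p + q, add_mem hp hq⟩ = X.φ ⟨p, hp⟩ + X.φ ⟨q, hq⟩ :=
      X.φ_add ⟨p, hp⟩ ⟨q, hq⟩
    have h2 : ψ (r + s') = ψ r + ψ s' := hψ.1 r s'
    rw [h1, h2]
    exact add_add_add_comm _ _ _ _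
  have hφ'smul : ∀ (a : ↥P') (r' : R) (hm : ℳ.smul ↑a r' ∈ P'),
      φ' ⟨ℳ.smul ↑a r', hm⟩ = ℰ.smul (φ' a) r' := by
    intro a r' hm
    obtain ⟨p, hp, r, hzr⟩ := (hmemP' ↑a).1 a.2
    have hps : ℳ.smul p r' ∈ X.P := X.grSub.1 p hp r'
    have heq : ℳ.smul (a : M) r' = ℳ.smul p r' + ℳ.smul x (𝒜.mul r r') := by
      rw [← hzr, hℳ.add_smul, hℳ.smul_mul]
    rw [wd ⟨ℳ.smul ↑a r', hm⟩ (ℳ.smul p r') hps (𝒜.mul r r') heq,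
      wd a p hp r hzr.symm]
    have h1 : X.φ ⟨ℳ.smul p r', hps⟩ = ℰ.smul (X.φ ⟨p, hp⟩) r' :=
      X.φ_smul ⟨p, hp⟩ r' hps
    have h2 : ψ (𝒜.mul r r') = ℰ.smul (ψ r) r' := hψ.2.1 r r'
    rw [h1, h2, ← hℰ.add_smul]
  have hφ'gr : ∀ (δ : GrIdx Γ) (z : ↥P'), (z : M) ∈ compAt ℳ δ →
      φ' z ∈ compAt ℰ δ := by
    intro δ z hz
    obtain ⟨p, hp, r, hzr⟩ := (hmemP' ↑z).1 z.2
    obtain ⟨sp, cfp, hcfp, hpsum⟩ := grSub_decomp_mem X.grSub hp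
    obtain ⟨sr, cfr, hcfr, hrsum⟩ := hR.decompose r
    set smap : Finset (GrIdx Γ) :=
      sr.map ⟨shiftIdx (Groupoid.inv σ₀), hinj⟩ with hsmapdef
    set df : GrIdx Γ → M := fun κ => (if κ ∈ sp then cfp κ else 0) +
      (if κ ∈ smap then ℳ.smul x (cfr (shiftIdx σ₀ κ)) else 0) with hdfdef
    have hdfmem : ∀ κ, df κ ∈ compAt ℳ κ := by
      intro κ
      apply add_mem
      · split
        · exact (hcfp κ ‹_›).1
        · exact zero_mem _
      · split
        · rename_i hκ
          rw [hsmapdef] at hκ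
          simp only [Finset.mem_map, Function.Embedding.coeFn_mk] at hκ
          obtain ⟨τ, hτ, rfl⟩ := hκ
          rw [shiftIdx_inv']
          exact hpiece τ (cfr τ) (hcfr τ hτ)
        · exact zero_mem _
    have hzsum : (z : M) = ∑ κ ∈ sp ∪ smap, df κ := by
      rw [hdfdef, Finset.sum_add_distrib, Finset.sum_ite_mem, Finset.sum_ite_mem,
        Finset.union_inter_cancel_left, Finset.union_inter_cancel_right]
      have e2 : ∑ κ ∈ smap, ℳ.smul x (cfr (shiftIdx σ₀ κ)) = ℳ.smul x r := by
        rw [hsmapdef, Finset.sum_map]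
        simp only [Function.Embedding.coeFn_mk]
        have e3 : ℳ.smul x r = ∑ τ ∈ sr, ℳ.smul x (cfr τ) := by
          rw [hrsum]
          exact map_sum (smulHomRight hℳ x) cfr sr
        rw [e3]
        exact Finset.sum_congr rfl fun τ _ => by rw [shiftIdx_inv']
      rw [e2, ← hpsum, hzr]
    have hkey := decomp_unique hℳ (s := sp ∪ smap) (cf := df)
      (fun κ _ => hdfmem κ) (t := {δ}) (df := fun _ => (z : M))
      (by
        intro τ hτ
        rw [Finset.mem_singleton] at hτ
        subst hτ
        exact hz)
      (by rw [← hzsum, Finset.sum_singleton])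
    have hδeq := hkey δ
    rw [if_pos (Finset.mem_singleton_self δ)] at hδeq
    by_cases hδu : δ ∈ sp ∪ smap
    · rw [if_pos hδu] at hδeq
      set p1 : M := if δ ∈ sp then cfp δ else 0 with hp1def
      set r1 : R := if δ ∈ smap then cfr (shiftIdx σ₀ δ) else 0 with hr1def
      have hz2 : (z : M) = p1 + ℳ.smul x r1 := by
        rw [← hδeq, hdfdef, hp1def, hr1def]
        by_cases hδs : δ ∈ smap
        · simp [hδs]
        · simp [hδs, smul_zero' hℳ]
      have hp1P : p1 ∈ X.P := by
        rw [hp1def]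
        split
        · exact (hcfp δ ‹_›).2
        · exact zero_mem _
      have hp1c : p1 ∈ compAt ℳ δ := by
        rw [hp1def]
        split
        · exact (hcfp δ ‹_›).1
        · exact zero_mem _
      rw [wd z p1 hp1P r1 hz2]
      apply add_mem
      · exact X.φ_gr δ ⟨p1, hp1P⟩ hp1c
      · by_cases hδs : δ ∈ smap
        · rw [hr1def, if_pos hδs]
          rw [hsmapdef] at hδs
          simp only [Finset.mem_map, Function.Embedding.coeFn_mk] at hδs
          obtain ⟨τ, hτ, rfl⟩ := hδs
          rw [shiftIdx_inv']
          obtain ⟨t1, t2, tm⟩ := τ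
          by_cases hc : t2 = a0
          · subst hc
            have e4 : shiftIdx (Groupoid.inv σ₀) (⟨t1, t2, tm⟩ : GrIdx Γ) =
                ⟨t1, b0, tm ≫ σ₀⟩ := by
              rw [shiftIdx_cod_f (Groupoid.inv σ₀) tm,
                show Groupoid.inv (Groupoid.inv σ₀) = σ₀ by simp]
            rw [e4]
            exact hψ.2.2.1 t1 tm (cfr ⟨t1, t2, tm⟩) (hcfr _ hτ)
          · rw [hψ.2.2.2 t1 t2 tm hc (cfr ⟨t1, t2, tm⟩) (hcfr _ hτ)]
            exact zero_mem _
        · rw [hr1def, if_neg hδs, hψ0]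
          exact zero_mem _
    · rw [if_neg hδu] at hδeq
      have hz0 : (z : M) = 0 + ℳ.smul x 0 := by
        rw [smul_zero' hℳ, add_zero, ← hδeq]
      rw [wd z 0 (zero_mem _) 0 hz0, hψ0, add_zero]
      have h11 : (⟨(0 : M), zero_mem X.P⟩ : ↥X.P) = 0 := rfl
      have h12 : X.φ 0 = 0 := X.φHom.map_zero
      rw [h11, h12]
      exact zero_mem _
  set X' : Ext ℳ ℰ := ⟨P', hP'sub, φ', hφ'add, hφ'smul, hφ'gr⟩ with hX'def
  have hXX' : X ≤ X' := by
    refine ⟨le_sup_left, ?_⟩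
    intro z hz hz'
    have hz0 : (z : M) = z + ℳ.smul x 0 := by rw [smul_zero' hℳ, add_zero]
    rw [show X'.φ = φ' from rfl] at *
    rw [wd ⟨z, hz'⟩ z hz 0 hz0, hψ0, add_zero]
  exact hxP ((hmax X' hXX').1 hxP')



theorem grInjective_of_baer (h𝒜 : 𝒜.IsObjectUnital)
    {ℰ : GModData Γ R E} (hℰ : ℰ.IsGraded 𝒜)
    (hbaer : ∀ U : AddSubgroup R, 𝒜.toMod.IsGrSub U →
      ∀ (e f : Γ) (γ : e ⟶ f) (h : ↥U → E),
        GModData.IsHomOfDeg (𝒜.toMod.restrict U) ℰ γ h →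
        ∃ h' : R → E, GModData.IsHomOfDeg 𝒜.toMod ℰ γ h' ∧
          ∀ x : ↥U, h' ↑x = h x) :
    GrInjective 𝒜 ℰ := by
  intro M N _ _ ℳ 𝒩 hℳ h𝒩 g hg hginj h hh
  classical
  set gH : N →+ M := AddMonoidHom.mk' g hg.1 with hgHdef
  set P₀ : AddSubgroup M := gH.range with hP₀def
  have hmem₀ : ∀ m : M, m ∈ P₀ ↔ ∃ y : N, g y = m := fun m => Iff.rfl
  have hpre : ∀ z : ↥P₀, ∃ y : N, g y = ↑z := fun z => z.2
  set φ₀ : ↥P₀ → E := fun z => h (hpre z).choose with hφ₀def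
  have wd₀ : ∀ (z : ↥P₀) (y : N), g y = ↑z → φ₀ z = h y := by
    intro z y hy
    have h1 := (hpre z).choose_spec
    have hyy : (hpre z).choose = y := hginj (by rw [h1, hy])
    show h (hpre z).choose = h y
    rw [hyy]
  have hgr₀ : ℳ.IsGrSub P₀ := by
    constructor
    · intro m hm a
      obtain ⟨y, rfl⟩ := (hmem₀ m).1 hm
      exact (hmem₀ _).2 ⟨𝒩.smul y a, hg.2.1 y a⟩
    · intro n hn
      obtain ⟨y, rfl⟩ := (hmem₀ n).1 hn
      obtain ⟨s, cf, hs, hsum⟩ := h𝒩.decompose y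
      have e1 : g y = ∑ τ ∈ s, g (cf τ) := by
        rw [hsum]
        exact map_sum gH cf s
      rw [e1]
      refine sum_mem fun τ hτ => AddSubgroup.subset_closure ⟨⟨cf τ, rfl⟩, ?_⟩
      exact ⟨τ.1, τ.2.1, τ.2.2, hg.2.2 τ.1 τ.2.1 τ.2.2 _ (hs τ hτ)⟩
  have hφ₀add : ∀ a b : ↥P₀, φ₀ (a + b) = φ₀ a + φ₀ b := by
    intro a b
    obtain ⟨ya, hya⟩ := hpre a
    obtain ⟨yb, hyb⟩ := hpre b
    have hyab : g (ya + yb) = ↑(a + b) := by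
      rw [hg.1 ya yb, hya, hyb]
      rfl
    rw [wd₀ (a + b) (ya + yb) hyab, wd₀ a ya hya, wd₀ b yb hyb]
    exact hh.1 ya yb
  have hφ₀smul : ∀ (a : ↥P₀) (r : R) (hm : ℳ.smul ↑a r ∈ P₀),
      φ₀ ⟨ℳ.smul ↑a r, hm⟩ = ℰ.smul (φ₀ a) r := by
    intro a r hm
    obtain ⟨ya, hya⟩ := hpre a
    have h1 : g (𝒩.smul ya r) = ℳ.smul ↑a r := by rw [hg.2.1 ya r, hya]
    rw [wd₀ ⟨ℳ.smul ↑a r, hm⟩ (𝒩.smul ya r) h1, wd₀ a ya hya]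
    exact hh.2.1 ya r
  have hφ₀gr : ∀ (δ : GrIdx Γ) (a : ↥P₀), ↑a ∈ compAt ℳ δ →
      φ₀ a ∈ compAt ℰ δ := by
    intro δ a ha
    obtain ⟨ya, hya⟩ := hpre a
    rw [wd₀ a ya hya]
    have h2 : ya ∈ compAt 𝒩 δ :=
      grHom_reflect hℳ h𝒩 hg hginj (by rw [hya]; exact ha)
    exact hh.2.2 δ.1 δ.2.1 δ.2.2 ya h2
  set X₀ : Ext ℳ ℰ := ⟨P₀, hgr₀, φ₀, hφ₀add, hφ₀smul, hφ₀gr⟩ with hX₀def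
  obtain ⟨Xm, hXm⟩ := zorn_le₀ {Y : Ext ℳ ℰ | X₀ ≤ Y} (by
    intro c hcs hc
    rcases c.eq_empty_or_nonempty with rfl | hne
    · exact ⟨X₀, le_refl X₀, fun z hz => absurd hz (Set.notMem_empty z)⟩
    · obtain ⟨ub, hub⟩ := Ext.chain_bound hc hne
      obtain ⟨Y, hY⟩ := hne
      exact ⟨ub, (hcs hY).trans (hub Y hY), hub⟩)
  have hX₀Xm : X₀ ≤ Xm := hXm.1
  have htop : Xm.P = ⊤ := Ext.max_step h𝒜 hℳ hℰ hbaer Xm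
    (fun Y hY => hXm.2 (hX₀Xm.trans hY) hY)
  have hall : ∀ m : M, m ∈ Xm.P := fun m => htop.symm ▸ AddSubgroup.mem_top m
  refine ⟨fun m => Xm.φ ⟨m, hall m⟩, ⟨?_, ?_, ?_⟩, ?_⟩
  · intro m n
    exact Xm.φ_add ⟨m, hall m⟩ ⟨n, hall n⟩
  · intro m a
    exact Xm.φ_smul ⟨m, hall m⟩ a (hall _)
  · intro e f σ m hm
    exact Xm.φ_gr ⟨e, f, σ⟩ ⟨m, hall m⟩ hm
  · intro y
    have h1 : g y ∈ P₀ := ⟨y, rfl⟩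
    have h2 := hX₀Xm.2 (g y) h1 (hall (g y))
    show Xm.φ ⟨g y, hall (g y)⟩ = h y
    rw [h2]
    exact wd₀ ⟨g y, h1⟩ y rfl

end GrBaer

/-- (Graded Baer criterion.) Let `R` be a `Γ`-graded ring and
`E` a `Γ`-graded right `R`-module. Then `E` is gr-injective iff for every graded
right ideal `U` of `R`, every morphism `γ` of `Γ`, and every homomorphism
`h : U → E` of degree `γ`, there is a homomorphism `h' : R → E` of degree `γ`
extending `h`. -/
theorem grInjective_iff_baer
    {Γ : Type u} [Groupoid.{u} Γ] {R : Type u} [AddCommGroup R] {E : Type u}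
    [AddCommGroup E] (𝒜 : GRingData Γ R) (h𝒜 : 𝒜.IsObjectUnital)
    (ℰ : GModData Γ R E) (hℰ : ℰ.IsGraded 𝒜) :
    GrInjective 𝒜 ℰ ↔
      ∀ U : AddSubgroup R, 𝒜.toMod.IsGrSub U →
        ∀ (e f : Γ) (γ : e ⟶ f) (h : ↥U → E),
          GModData.IsHomOfDeg (𝒜.toMod.restrict U) ℰ γ h →
          ∃ h' : R → E, GModData.IsHomOfDeg 𝒜.toMod ℰ γ h' ∧
            ∀ x : ↥U, h' ↑x = h x := by
  constructor
  · intro hinj U hU e f γ h hh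
    exact GrBaer.baer_of_grInjective h𝒜 hℰ hinj U hU γ h hh
  · intro hb
    exact GrBaer.grInjective_of_baer h𝒜 hℰ hb
end
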